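/- arXiv:2103.16395 — 3 statements merged into one kernel-verified Lean document; each statement's English description precedes it below -/
import Mathlib

section
/- Let η, m, ε, n be positive integers. Let ω₃ be the smallest singular value (the 2ηmεn-th largest singular value) of the 2ηmεn × ((η+1)mεn + ηm(ε+1)n) block matrix [[E_η⊗I_{mεn}, I_{ηm}⊗E_ε⊗I_n],[F_η⊗I_{mεn}, I_{ηm}⊗F_ε⊗I_n]]. Then ω₃ ≥ 2√2/(ε+η). (In fact ω₃ = 2·sin(π/(4·min(ε,η)+2)) if ε ≠ η and ω₃ = 2·sin(π/(4η)) if ε = η.) -/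
open Matrix
open scoped Kronecker

noncomputable section

/-- The `k × (k+1)` matrix `E_k = [I_k 0]`. -/
def Ek (𝕜 : Type*) [RCLike 𝕜] (k : ℕ) : Matrix (Fin k) (Fin (k+1)) 𝕜 :=
  Matrix.of fun i j => if (j : ℕ) = (i : ℕ) then 1 else 0

/-- The `k × (k+1)` matrix `F_k = [0 I_k]`. -/
def Fk (𝕜 : Type*) [RCLike 𝕜] (k : ℕ) : Matrix (Fin k) (Fin (k+1)) 𝕜 :=
  Matrix.of fun i j => if (j : ℕ) = (i : ℕ) + 1 then 1 else 0

/-- The standard unit vector `(0, …, 0, 1)ᵀ` of size `k+1`. -/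
def evec (𝕜 : Type*) [RCLike 𝕜] (k : ℕ) : Fin (k+1) → 𝕜 :=
  fun i => if (i : ℕ) = k then 1 else 0

variable {𝕜 : Type*} [RCLike 𝕜]

/-- Frobenius norm of a matrix. -/
def frobNorm {p q : Type*} [Fintype p] [Fintype q] (M : Matrix p q 𝕜) : ℝ :=
  Real.sqrt (∑ i, ∑ j, ‖M i j‖ ^ 2)

/-- Spectral norm (largest singular value) of a matrix. -/
def specNorm {p q : Type*} [Fintype p] [Fintype q] [DecidableEq p] (M : Matrix p q 𝕜) : ℝ :=
  Real.sqrt (⨆ i, (Matrix.isHermitian_mul_conjTranspose_self M).eigenvalues i)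

/-- Smallest singular value of a `p × q` matrix with `p ≤ q`
(the `p`-th largest singular value). -/
def sigmaMin {p q : Type*} [Fintype p] [Fintype q] [DecidableEq p] (M : Matrix p q 𝕜) : ℝ :=
  Real.sqrt (⨅ i, (Matrix.isHermitian_mul_conjTranspose_self M).eigenvalues i)

/-- Euclidean norm of a vector. -/
def vecNorm {q : Type*} [Fintype q] (x : q → 𝕜) : ℝ :=
  Real.sqrt (∑ i, ‖x i‖ ^ 2)

/-- Frobenius norm of the pencil `P.1 - λ • P.2`. -/
def pFrob {p q : Type*} [Fintype p] [Fintype q] (P : Matrix p q 𝕜 × Matrix p q 𝕜) : ℝ :=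
  Real.sqrt (frobNorm P.1 ^ 2 + frobNorm P.2 ^ 2)

/-- Spectral norm of the pencil `P.1 - λ • P.2`. -/
def pSpec {p q : Type*} [Fintype p] [Fintype q] [DecidableEq p]
    (P : Matrix p q 𝕜 × Matrix p q 𝕜) : ℝ :=
  Real.sqrt (specNorm P.1 ^ 2 + specNorm P.2 ^ 2)

/-- A 3×3 block matrix. -/
def blocks3 {R1 R2 R3 C1 C2 C3 : Type*}
    (M11 : Matrix R1 C1 𝕜) (M12 : Matrix R1 C2 𝕜) (M13 : Matrix R1 C3 𝕜)
    (M21 : Matrix R2 C1 𝕜) (M22 : Matrix R2 C2 𝕜) (M23 : Matrix R2 C3 𝕜)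
    (M31 : Matrix R3 C1 𝕜) (M32 : Matrix R3 C2 𝕜) (M33 : Matrix R3 C3 𝕜) :
    Matrix (R1 ⊕ (R2 ⊕ R3)) (C1 ⊕ (C2 ⊕ C3)) 𝕜 :=
  Matrix.fromBlocks M11 (Matrix.fromCols M12 M13) (Matrix.fromRows M21 M31)
    (Matrix.fromBlocks M22 M23 M32 M33)

/-- `K̂₂ᵀ C = (e_{η+1} ⊗ I_m) C`. -/
def colUnit {m ℓ : ℕ} (η : ℕ) (C : Matrix (Fin m) (Fin ℓ) 𝕜) :
    Matrix (Fin (η+1) × Fin m) (Fin ℓ) 𝕜 :=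
  Matrix.of fun i j => evec 𝕜 η i.1 * C i.2 j

/-- `B K̂₁ = B (e_{ε+1}ᵀ ⊗ I_n)`. -/
def rowUnit {n ℓ : ℕ} (ε : ℕ) (B : Matrix (Fin ℓ) (Fin n) 𝕜) :
    Matrix (Fin ℓ) (Fin (ε+1) × Fin n) 𝕜 :=
  Matrix.of fun i j => evec 𝕜 ε j.1 * B i j.2

/-- Row index type of a block Kronecker pencil. -/
abbrev SRow (m ℓ ε η n : ℕ) := (Fin (η+1) × Fin m) ⊕ (Fin ℓ ⊕ (Fin ε × Fin n))

/-- Column index type of a block Kronecker pencil. -/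
abbrev SCol (m ℓ ε η n : ℕ) := (Fin (ε+1) × Fin n) ⊕ (Fin ℓ ⊕ (Fin η × Fin m))

/-- The block Kronecker pencil
`S(λ) = [[M(λ), K̂₂ᵀC, K₂ᵀ(λ)], [BK̂₁, A-λI, 0], [K₁(λ), 0, 0]]`
represented as a pair `(Sa, Sb)` with `S(λ) = Sa - λ Sb`. -/
def blockKron (m n ℓ ε η : ℕ) (A : Matrix (Fin ℓ) (Fin ℓ) 𝕜) (B : Matrix (Fin ℓ) (Fin n) 𝕜)
    (C : Matrix (Fin m) (Fin ℓ) 𝕜)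
    (M : Matrix (Fin (η+1) × Fin m) (Fin (ε+1) × Fin n) 𝕜 ×
         Matrix (Fin (η+1) × Fin m) (Fin (ε+1) × Fin n) 𝕜) :
    Matrix (SRow m ℓ ε η n) (SCol m ℓ ε η n) 𝕜 × Matrix (SRow m ℓ ε η n) (SCol m ℓ ε η n) 𝕜 :=
  (blocks3 M.1 (colUnit η C) ((Ek 𝕜 η)ᵀ ⊗ₖ (1 : Matrix (Fin m) (Fin m) 𝕜))
      (rowUnit ε B) A 0
      (Ek 𝕜 ε ⊗ₖ (1 : Matrix (Fin n) (Fin n) 𝕜)) 0 0,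
   blocks3 M.2 0 ((Fk 𝕜 η)ᵀ ⊗ₖ (1 : Matrix (Fin m) (Fin m) 𝕜))
      0 1 0
      (Fk 𝕜 ε ⊗ₖ (1 : Matrix (Fin n) (Fin n) 𝕜)) 0 0)

/-- Row index type of the matrix `T`. -/
abbrev TRow (m ℓ ε η n : ℕ) :=
  (((Fin η × Fin m) × Fin ℓ) ⊕ ((Fin η × Fin m) × Fin ℓ)) ⊕
  (((Fin ℓ × (Fin ε × Fin n)) ⊕ (Fin ℓ × (Fin ε × Fin n))) ⊕
   (((Fin η × Fin m) × (Fin ε × Fin n)) ⊕ ((Fin η × Fin m) × (Fin ε × Fin n))))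

/-- Column index type of the matrix `T`. -/
abbrev TCol (m ℓ ε η n : ℕ) :=
  (((Fin (η+1) × Fin m) × Fin ℓ) ⊕ ((Fin η × Fin m) × Fin ℓ)) ⊕
  (((Fin ℓ × (Fin ε × Fin n)) ⊕ (Fin ℓ × (Fin (ε+1) × Fin n))) ⊕
   (((Fin (η+1) × Fin m) × (Fin ε × Fin n)) ⊕ ((Fin η × Fin m) × (Fin (ε+1) × Fin n))))

/-- The 6×6 block matrix `T`. -/
def Tmat (m n ℓ ε η : ℕ) (A : Matrix (Fin ℓ) (Fin ℓ) 𝕜) (B : Matrix (Fin ℓ) (Fin n) 𝕜)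
    (C : Matrix (Fin m) (Fin ℓ) 𝕜) : Matrix (TRow m ℓ ε η n) (TCol m ℓ ε η n) 𝕜 :=
  Matrix.fromRows
    (Matrix.fromCols
      (Matrix.fromBlocks
        ((Ek 𝕜 η ⊗ₖ (1 : Matrix (Fin m) (Fin m) 𝕜)) ⊗ₖ (1 : Matrix (Fin ℓ) (Fin ℓ) 𝕜))
        ((1 : Matrix (Fin η × Fin m) (Fin η × Fin m) 𝕜) ⊗ₖ A)
        ((Fk 𝕜 η ⊗ₖ (1 : Matrix (Fin m) (Fin m) 𝕜)) ⊗ₖ (1 : Matrix (Fin ℓ) (Fin ℓ) 𝕜))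
        ((1 : Matrix (Fin η × Fin m) (Fin η × Fin m) 𝕜) ⊗ₖ (1 : Matrix (Fin ℓ) (Fin ℓ) 𝕜)))
      (Matrix.fromCols 0
        (Matrix.fromBlocks 0
          ((1 : Matrix (Fin η × Fin m) (Fin η × Fin m) 𝕜) ⊗ₖ (rowUnit ε B))
          0 0)))
    (Matrix.fromRows
      (Matrix.fromCols 0
        (Matrix.fromCols
          (Matrix.fromBlocks
            (Aᵀ ⊗ₖ (1 : Matrix (Fin ε × Fin n) (Fin ε × Fin n) 𝕜))
            ((1 : Matrix (Fin ℓ) (Fin ℓ) 𝕜) ⊗ₖ (Ek 𝕜 ε ⊗ₖ (1 : Matrix (Fin n) (Fin n) 𝕜)))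
            ((1 : Matrix (Fin ℓ) (Fin ℓ) 𝕜) ⊗ₖ (1 : Matrix (Fin ε × Fin n) (Fin ε × Fin n) 𝕜))
            ((1 : Matrix (Fin ℓ) (Fin ℓ) 𝕜) ⊗ₖ (Fk 𝕜 ε ⊗ₖ (1 : Matrix (Fin n) (Fin n) 𝕜))))
          (Matrix.fromBlocks
            (Matrix.of fun (i : Fin ℓ × (Fin ε × Fin n))
                (j : (Fin (η+1) × Fin m) × (Fin ε × Fin n)) =>
              evec 𝕜 η j.1.1 * C j.1.2 i.1 * (if i.2 = j.2 then 1 else 0))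
            0 0 0)))
      (Matrix.fromCols 0
        (Matrix.fromCols 0
          (Matrix.fromBlocks
            ((Ek 𝕜 η ⊗ₖ (1 : Matrix (Fin m) (Fin m) 𝕜)) ⊗ₖ
              (1 : Matrix (Fin ε × Fin n) (Fin ε × Fin n) 𝕜))
            ((1 : Matrix (Fin η × Fin m) (Fin η × Fin m) 𝕜) ⊗ₖ
              (Ek 𝕜 ε ⊗ₖ (1 : Matrix (Fin n) (Fin n) 𝕜)))
            ((Fk 𝕜 η ⊗ₖ (1 : Matrix (Fin m) (Fin m) 𝕜)) ⊗ₖ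
              (1 : Matrix (Fin ε × Fin n) (Fin ε × Fin n) 𝕜))
            ((1 : Matrix (Fin η × Fin m) (Fin η × Fin m) 𝕜) ⊗ₖ
              (Fk 𝕜 ε ⊗ₖ (1 : Matrix (Fin n) (Fin n) 𝕜)))))))

/-- The 6×6 block matrix `ΔT` built from the blocks of the perturbation pencil. -/
def DeltaT (m n ℓ ε η : ℕ)
    (Δ12a Δ12b : Matrix (Fin (η+1) × Fin m) (Fin ℓ) 𝕜)
    (Δ13a Δ13b : Matrix (Fin (η+1) × Fin m) (Fin η × Fin m) 𝕜)
    (Δ21a Δ21b : Matrix (Fin ℓ) (Fin (ε+1) × Fin n) 𝕜)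
    (Δ22a Δ22b : Matrix (Fin ℓ) (Fin ℓ) 𝕜)
    (Δ23a Δ23b : Matrix (Fin ℓ) (Fin η × Fin m) 𝕜)
    (Δ31a Δ31b : Matrix (Fin ε × Fin n) (Fin (ε+1) × Fin n) 𝕜)
    (Δ32a Δ32b : Matrix (Fin ε × Fin n) (Fin ℓ) 𝕜) :
    Matrix (TRow m ℓ ε η n) (TCol m ℓ ε η n) 𝕜 :=
  Matrix.fromRows
    (Matrix.fromCols
      (Matrix.fromBlocks
        (Δ13aᵀ ⊗ₖ (1 : Matrix (Fin ℓ) (Fin ℓ) 𝕜))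
        ((1 : Matrix (Fin η × Fin m) (Fin η × Fin m) 𝕜) ⊗ₖ Δ22a)
        (Δ13bᵀ ⊗ₖ (1 : Matrix (Fin ℓ) (Fin ℓ) 𝕜))
        ((1 : Matrix (Fin η × Fin m) (Fin η × Fin m) 𝕜) ⊗ₖ Δ22b))
      (Matrix.fromCols 0
        (Matrix.fromBlocks 0 ((1 : Matrix (Fin η × Fin m) (Fin η × Fin m) 𝕜) ⊗ₖ Δ21a)
          0 ((1 : Matrix (Fin η × Fin m) (Fin η × Fin m) 𝕜) ⊗ₖ Δ21b))))
    (Matrix.fromRows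
      (Matrix.fromCols 0
        (Matrix.fromCols
          (Matrix.fromBlocks
            (Δ22aᵀ ⊗ₖ (1 : Matrix (Fin ε × Fin n) (Fin ε × Fin n) 𝕜))
            ((1 : Matrix (Fin ℓ) (Fin ℓ) 𝕜) ⊗ₖ Δ31a)
            (Δ22bᵀ ⊗ₖ (1 : Matrix (Fin ε × Fin n) (Fin ε × Fin n) 𝕜))
            ((1 : Matrix (Fin ℓ) (Fin ℓ) 𝕜) ⊗ₖ Δ31b))
          (Matrix.fromBlocks
            (Δ12aᵀ ⊗ₖ (1 : Matrix (Fin ε × Fin n) (Fin ε × Fin n) 𝕜)) 0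
            (Δ12bᵀ ⊗ₖ (1 : Matrix (Fin ε × Fin n) (Fin ε × Fin n) 𝕜)) 0)))
      (Matrix.fromCols
        (Matrix.fromBlocks 0 ((1 : Matrix (Fin η × Fin m) (Fin η × Fin m) 𝕜) ⊗ₖ Δ32a)
          0 ((1 : Matrix (Fin η × Fin m) (Fin η × Fin m) 𝕜) ⊗ₖ Δ32b))
        (Matrix.fromCols
          (Matrix.fromBlocks
            (Δ23aᵀ ⊗ₖ (1 : Matrix (Fin ε × Fin n) (Fin ε × Fin n) 𝕜)) 0
            (Δ23bᵀ ⊗ₖ (1 : Matrix (Fin ε × Fin n) (Fin ε × Fin n) 𝕜)) 0)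
          (Matrix.fromBlocks
            (Δ13aᵀ ⊗ₖ (1 : Matrix (Fin ε × Fin n) (Fin ε × Fin n) 𝕜))
            ((1 : Matrix (Fin η × Fin m) (Fin η × Fin m) 𝕜) ⊗ₖ Δ31a)
            (Δ13bᵀ ⊗ₖ (1 : Matrix (Fin ε × Fin n) (Fin ε × Fin n) 𝕜))
            ((1 : Matrix (Fin η × Fin m) (Fin η × Fin m) 𝕜) ⊗ₖ Δ31b)))))

/-- `(Λ_k(x) ⊗ I_m)` where `Λ_k(x) = (x^k, …, x, 1)ᵀ`. -/
def LamI (𝕜 : Type*) [RCLike 𝕜] (k m : ℕ) (x : 𝕜) :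
    Matrix (Fin (k+1) × Fin m) (Fin m) 𝕜 :=
  Matrix.of fun i j => if i.2 = j then x ^ (k - (i.1 : ℕ)) else 0

/-- `(A, B)` is controllable if the controllability matrix `[B, AB, …, A^{ℓ-1}B]`
has full rank `ℓ`. -/
def Controllable {ℓ n : ℕ} (A : Matrix (Fin ℓ) (Fin ℓ) 𝕜)
    (B : Matrix (Fin ℓ) (Fin n) 𝕜) : Prop :=
  (Matrix.of fun (i : Fin ℓ) (p : Fin ℓ × Fin n) => (A ^ (p.1 : ℕ) * B) i p.2).rank = ℓ

/-- `(A, C)` is observable if `(Aᵀ, Cᵀ)` is controllable. -/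
def Observable {ℓ m : ℕ} (A : Matrix (Fin ℓ) (Fin ℓ) 𝕜)
    (C : Matrix (Fin m) (Fin ℓ) 𝕜) : Prop :=
  Controllable Aᵀ Cᵀ

end


open Finset Real

namespace St2

/-- start of occupied positions on antidiagonal chain `k` -/
def smin (ε k : ℕ) : ℕ := if k < ε then 0 else 2*(k-ε)+1
/-- end of occupied positions on antidiagonal chain `k` -/
def smax (η k : ℕ) : ℕ := if k < η then 2*k else 2*η-1

/-- weight along chain `k` at position `s` -/
noncomputable def WW (ε N k s : ℕ) : ℝ := Real.sin (((s + 1 - smin ε k : ℕ) : ℝ) * (Real.pi / N))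

noncomputable def Wu (ε N i j : ℕ) : ℝ := WW ε N (i+j) (2*i)
noncomputable def Wv (ε N i j : ℕ) : ℝ := WW ε N (i+j+1) (2*i+1)

section Core

variable (η ε N : ℕ)

lemma sin_pos_aux (hN : 0 < N) (p : ℕ) (h1 : 1 ≤ p) (h2 : p < N) :
    0 < Real.sin ((p : ℝ) * (Real.pi / N)) := by
  have hNpos : (0:ℝ) < (N:ℝ) := by exact_mod_cast hN
  apply Real.sin_pos_of_pos_of_lt_pi
  · have h : (0:ℝ) < Real.pi / N := by positivity
    have h1' : (1:ℝ) ≤ (p:ℝ) := by exact_mod_cast h1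
    nlinarith
  · have hp : (p:ℝ) < (N:ℝ) := by exact_mod_cast h2
    calc (p:ℝ) * (Real.pi / N) < (N:ℝ) * (Real.pi / N) := by
          apply mul_lt_mul_of_pos_right hp; positivity
      _ = Real.pi := by field_simp

lemma sin_nonneg_aux (hN : 0 < N) (p : ℕ) (h2 : p ≤ N) :
    0 ≤ Real.sin ((p : ℝ) * (Real.pi / N)) := by
  apply Real.sin_nonneg_of_nonneg_of_le_pi
  · positivity
  · have hp : (p:ℝ) ≤ (N:ℝ) := by exact_mod_cast h2
    have hNpos : (0:ℝ) < (N:ℝ) := by exact_mod_cast hN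
    calc (p:ℝ) * (Real.pi / N) ≤ (N:ℝ) * (Real.pi / N) := by
          apply mul_le_mul_of_nonneg_right hp; positivity
      _ = Real.pi := by field_simp

variable {η ε N}

section withL
variable (hη : 0 < η) (hε : 0 < ε) (hN : 2 ≤ N)
  (hL : ∀ k, smax η k + 2 ≤ N + smin ε k)

-- basic arithmetic about positions
lemma sm_facts {i j : ℕ} (hi : i < η) (hj : j < ε) :
    smin ε (i+j) ≤ 2*i ∧ 2*i ≤ smax η (i+j) ∧
    smin ε (i+j+1) ≤ 2*i+1 ∧ 2*i+1 ≤ smax η (i+j+1) := by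
  unfold smin smax; split_ifs <;> omega

include hN hL in
lemma Wu_pos {i j : ℕ} (hi : i < η) (hj : j < ε) : 0 < Wu ε N i j := by
  obtain ⟨h1, h2, h3, h4⟩ := sm_facts (ε := ε) hi hj
  have hLk := hL (i+j)
  unfold Wu WW
  exact sin_pos_aux N (by omega) _ (by omega) (by omega)

include hN hL in
lemma Wv_pos {i j : ℕ} (hi : i < η) (hj : j < ε) : 0 < Wv ε N i j := by
  obtain ⟨h1, h2, h3, h4⟩ := sm_facts (ε := ε) hi hj
  have hLk := hL (i+j+1)
  unfold Wv WW
  exact sin_pos_aux N (by omega) _ (by omega) (by omega)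

-- the key three-term trig recurrence
lemma sin_rec (p : ℕ) (hp : 1 ≤ p) (x : ℝ) :
    Real.sin (((p-1 : ℕ) : ℝ) * x) + Real.sin (((p+1 : ℕ) : ℝ) * x)
      = 2 * Real.cos x * Real.sin ((p : ℝ) * x) := by
  have h1 : ((p-1 : ℕ) : ℝ) = (p : ℝ) - 1 := by
    have : (1:ℕ) ≤ p := hp
    push_cast [Nat.cast_sub this]; ring
  have h2 : ((p+1 : ℕ) : ℝ) = (p : ℝ) + 1 := by push_cast; ring
  rw [h1, h2, sub_mul, add_mul, one_mul, Real.sin_sub, Real.sin_add]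
  ring

include hη hε hN hL in
lemma Lu {i j : ℕ} (hi : i < η) (hj : j < ε) :
    (if i = 0 then 0 else Wv ε N (i-1) j) + (if j = 0 then 0 else Wv ε N i (j-1))
      ≤ 2 * Real.cos (Real.pi / N) * Wu ε N i j := by
  obtain ⟨h1, h2, h3, h4⟩ := sm_facts (ε := ε) hi hj
  have hLk := hL (i+j)
  obtain ⟨p, hp⟩ : ∃ p, p = 2*i+1 - smin ε (i+j) := ⟨_, rfl⟩
  have hp1 : 1 ≤ p := by omega
  have hp2 : p + 1 ≤ N := by omega
  have key : Real.sin (((p-1 : ℕ) : ℝ) * (Real.pi/N)) + Real.sin (((p+1 : ℕ) : ℝ) * (Real.pi/N))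
      = 2 * Real.cos (Real.pi / N) * Wu ε N i j := by
    rw [sin_rec p hp1]
    unfold Wu WW
    rw [← hp]
  rw [← key]
  gcongr
  · -- first term
    by_cases hi0 : i = 0
    · simp only [hi0, if_pos]
      exact sin_nonneg_aux N (by omega) _ (by omega)
    · rw [if_neg hi0]
      have hch : (i-1) + j + 1 = i + j := by omega
      have harg : 2*(i-1)+1 + 1 - smin ε ((i-1)+j+1) = p - 1 := by
        rw [hch]
        obtain ⟨g1, g2, g3, g4⟩ := sm_facts (η := η) (ε := ε) (i := i-1) (j := j) (by omega) hj
        rw [hch] at g3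
        omega
      unfold Wv WW
      rw [harg]
  · by_cases hj0 : j = 0
    · simp only [hj0, if_pos]
      exact sin_nonneg_aux N (by omega) _ (by omega)
    · rw [if_neg hj0]
      have hch : i + (j-1) + 1 = i + j := by omega
      have harg : 2*i+1 + 1 - smin ε (i+(j-1)+1) = p + 1 := by rw [hch]; omega
      unfold Wv WW
      rw [harg]

include hη hε hN hL in
lemma Lv {i j : ℕ} (hi : i < η) (hj : j < ε) :
    (if i+1 < η then Wu ε N (i+1) j else 0) + (if j+1 < ε then Wu ε N i (j+1) else 0)
      ≤ 2 * Real.cos (Real.pi / N) * Wv ε N i j := by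
  obtain ⟨h1, h2, h3, h4⟩ := sm_facts (ε := ε) hi hj
  have hLk := hL (i+j+1)
  obtain ⟨p, hp⟩ : ∃ p, p = 2*i+1+1 - smin ε (i+j+1) := ⟨_, rfl⟩
  have hp1 : 1 ≤ p := by omega
  have hp2 : p + 1 ≤ N := by omega
  have key : Real.sin (((p+1 : ℕ) : ℝ) * (Real.pi/N)) + Real.sin (((p-1 : ℕ) : ℝ) * (Real.pi/N))
      = 2 * Real.cos (Real.pi / N) * Wv ε N i j := by
    rw [add_comm, sin_rec p hp1]
    unfold Wv WW
    rw [← hp]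
  rw [← key]
  gcongr
  · by_cases hi1 : i+1 < η
    · rw [if_pos hi1]
      have hch : (i+1) + j = i + j + 1 := by omega
      have harg : 2*(i+1) + 1 - smin ε ((i+1)+j) = p + 1 := by rw [hch]; omega
      unfold Wu WW
      rw [harg]
    · rw [if_neg hi1]
      exact sin_nonneg_aux N (by omega) _ (by omega)
  · by_cases hj1 : j+1 < ε
    · rw [if_pos hj1]
      have hch : i + (j+1) = i + j + 1 := by omega
      have harg : 2*i + 1 - smin ε (i+(j+1)) = p - 1 := by rw [hch]; omega
      unfold Wu WW
      rw [harg]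
    · rw [if_neg hj1]
      exact sin_nonneg_aux N (by omega) _ (by omega)

end withL

end Core

end St2

set_option linter.unusedSectionVars false
set_option maxHeartbeats 800000
namespace St2

section Core
variable {η ε N : ℕ}

lemma shiftSum (K : ℕ) (f : ℕ → ℝ) :
    ∑ i ∈ Finset.range K, (if i = 0 then 0 else f i)
      = ∑ i ∈ Finset.range K, (if i + 1 < K then f (i+1) else 0) := by
  cases K with
  | zero => simp
  | succ k =>
    rw [Finset.sum_range_succ', Finset.sum_range_succ]
    rw [if_pos rfl, if_neg (by omega), add_zero, add_zero]
    exact Finset.sum_congr rfl fun i hi => by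
      rw [Finset.mem_range] at hi
      rw [if_neg (by omega), if_pos (by omega)]

lemma amgm (a b x y : ℝ) (ha : 0 < a) (hb : 0 < b) :
    x * y ≤ b/(2*a)*x^2 + a/(2*b)*y^2 := by
  have key : b/(2*a)*x^2 + a/(2*b)*y^2 - x*y = (b*x - a*y)^2/(2*a*b) := by
    field_simp; ring
  nlinarith [div_nonneg (sq_nonneg (b*x - a*y)) (by positivity : (0:ℝ) ≤ 2*a*b)]

variable (hη : 0 < η) (hε : 0 < ε) (hN : 2 ≤ N)
  (hL : ∀ k, smax η k + 2 ≤ N + smin ε k)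

include hη hε hN hL in
lemma crossBound (u v : ℕ → ℕ → ℝ)
    (hu : ∀ i j, η ≤ i ∨ ε ≤ j → u i j = 0) :
    ∑ i ∈ Finset.range η, ∑ j ∈ Finset.range ε,
      (u i j * ((if i = 0 then 0 else v (i-1) j) + (if j = 0 then 0 else v i (j-1)))
        + v i j * (u (i+1) j + u i (j+1)))
      ≤ 2 * Real.cos (Real.pi/N)
        * ∑ i ∈ Finset.range η, ∑ j ∈ Finset.range ε, ((u i j)^2 + (v i j)^2) := by
  set C := Real.cos (Real.pi/N) with hC
  set A1 := ∑ i ∈ Finset.range η, ∑ j ∈ Finset.range ε,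
      u i j * (if i = 0 then 0 else v (i-1) j) with hA1
  set A2 := ∑ i ∈ Finset.range η, ∑ j ∈ Finset.range ε,
      u i j * (if j = 0 then 0 else v i (j-1)) with hA2
  set B1 := ∑ i ∈ Finset.range η, ∑ j ∈ Finset.range ε, v i j * u (i+1) j with hB1
  set B2 := ∑ i ∈ Finset.range η, ∑ j ∈ Finset.range ε, v i j * u i (j+1) with hB2
  have hsplit : ∑ i ∈ Finset.range η, ∑ j ∈ Finset.range ε,
      (u i j * ((if i = 0 then 0 else v (i-1) j) + (if j = 0 then 0 else v i (j-1)))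
        + v i j * (u (i+1) j + u i (j+1))) = (A1 + A2) + (B1 + B2) := by
    rw [hA1, hA2, hB1, hB2]
    simp only [mul_add, Finset.sum_add_distrib]
  rw [hsplit]
  have hB1A1 : A1 = B1 := by
    rw [hB1, hA1]
    calc ∑ i ∈ Finset.range η, ∑ j ∈ Finset.range ε, u i j * (if i = 0 then 0 else v (i-1) j)
        = ∑ i ∈ Finset.range η,
            (if i = 0 then 0 else ∑ j ∈ Finset.range ε, v (i-1) j * u i j) := by
          refine Finset.sum_congr rfl fun i hi => ?_
          by_cases h : i = 0
          · simp [h]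
          · rw [if_neg h]
            refine Finset.sum_congr rfl fun j hj => ?_
            rw [if_neg h]; ring
      _ = ∑ i ∈ Finset.range η,
            (if i + 1 < η then ∑ j ∈ Finset.range ε, v (i+1-1) j * u (i+1) j else 0) :=
          shiftSum η _
      _ = ∑ i ∈ Finset.range η, ∑ j ∈ Finset.range ε, v i j * u (i+1) j := by
          refine Finset.sum_congr rfl fun i hi => ?_
          rw [Finset.mem_range] at hi
          simp only [Nat.add_sub_cancel]
          by_cases h : i + 1 < η
          · rw [if_pos h]
          · rw [if_neg h]
            symm
            exact Finset.sum_eq_zero fun j hj => by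
              rw [hu (i+1) j (Or.inl (by omega)), mul_zero]
  have hB2A2 : A2 = B2 := by
    rw [hB2, hA2]
    refine Finset.sum_congr rfl fun i hi => ?_
    calc ∑ j ∈ Finset.range ε, u i j * (if j = 0 then 0 else v i (j-1))
        = ∑ j ∈ Finset.range ε, (if j = 0 then 0 else v i (j-1) * u i j) := by
          refine Finset.sum_congr rfl fun j hj => ?_
          by_cases h : j = 0
          · simp [h]
          · rw [if_neg h, if_neg h]; ring
      _ = ∑ j ∈ Finset.range ε, (if j + 1 < ε then v i (j+1-1) * u i (j+1) else 0) :=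
          shiftSum ε _
      _ = ∑ j ∈ Finset.range ε, v i j * u i (j+1) := by
          refine Finset.sum_congr rfl fun j hj => ?_
          simp only [Nat.add_sub_cancel]
          by_cases h : j + 1 < ε
          · rw [if_pos h]
          · rw [if_neg h, hu i (j+1) (Or.inr (by omega)), mul_zero]
  rw [← hB1A1, ← hB2A2]
  have main : A1 + A2 ≤ C * ∑ i ∈ Finset.range η, ∑ j ∈ Finset.range ε,
      ((u i j)^2 + (v i j)^2) := by
    have bA1 : A1 ≤ (∑ i ∈ Finset.range η, ∑ j ∈ Finset.range ε,
          (if i = 0 then 0 else Wv ε N (i-1) j) / (2 * Wu ε N i j) * (u i j)^2)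
        + ∑ i ∈ Finset.range η, ∑ j ∈ Finset.range ε,
          (if i = 0 then 0 else Wu ε N i j / (2 * Wv ε N (i-1) j) * (v (i-1) j)^2) := by
      have step : A1 ≤ ∑ i ∈ Finset.range η, ∑ j ∈ Finset.range ε,
          ((if i = 0 then 0 else Wv ε N (i-1) j) / (2 * Wu ε N i j) * (u i j)^2
            + (if i = 0 then 0 else Wu ε N i j / (2 * Wv ε N (i-1) j) * (v (i-1) j)^2)) := by
        rw [hA1]
        refine Finset.sum_le_sum fun i hi => Finset.sum_le_sum fun j hj => ?_
        rw [Finset.mem_range] at hi hj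
        by_cases h : i = 0
        · simp [h]
        · rw [if_neg h, if_neg h, if_neg h]
          have h1 : 0 < Wu ε N i j := Wu_pos hN hL hi hj
          have h2 : 0 < Wv ε N (i-1) j := Wv_pos hN hL (by omega) hj
          exact amgm _ _ _ _ h1 h2
      refine step.trans (le_of_eq ?_)
      simp only [Finset.sum_add_distrib]
    have bA2 : A2 ≤ (∑ i ∈ Finset.range η, ∑ j ∈ Finset.range ε,
          (if j = 0 then 0 else Wv ε N i (j-1)) / (2 * Wu ε N i j) * (u i j)^2)
        + ∑ i ∈ Finset.range η, ∑ j ∈ Finset.range ε,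
          (if j = 0 then 0 else Wu ε N i j / (2 * Wv ε N i (j-1)) * (v i (j-1))^2) := by
      have step : A2 ≤ ∑ i ∈ Finset.range η, ∑ j ∈ Finset.range ε,
          ((if j = 0 then 0 else Wv ε N i (j-1)) / (2 * Wu ε N i j) * (u i j)^2
            + (if j = 0 then 0 else Wu ε N i j / (2 * Wv ε N i (j-1)) * (v i (j-1))^2)) := by
        rw [hA2]
        refine Finset.sum_le_sum fun i hi => Finset.sum_le_sum fun j hj => ?_
        rw [Finset.mem_range] at hi hj
        by_cases h : j = 0
        · simp [h]
        · rw [if_neg h, if_neg h, if_neg h]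
          have h1 : 0 < Wu ε N i j := Wu_pos hN hL hi hj
          have h2 : 0 < Wv ε N i (j-1) := Wv_pos hN hL hi (by omega)
          exact amgm _ _ _ _ h1 h2
      refine step.trans (le_of_eq ?_)
      simp only [Finset.sum_add_distrib]
    -- shift the two v-sums
    have shift1 : (∑ i ∈ Finset.range η, ∑ j ∈ Finset.range ε,
          (if i = 0 then 0 else Wu ε N i j / (2 * Wv ε N (i-1) j) * (v (i-1) j)^2))
        = ∑ i ∈ Finset.range η, ∑ j ∈ Finset.range ε,
          (if i + 1 < η then Wu ε N (i+1) j else 0) / (2 * Wv ε N i j) * (v i j)^2 := by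
      have e0 : ∀ i ∈ Finset.range η, ∑ j ∈ Finset.range ε,
          (if i = 0 then 0 else Wu ε N i j / (2 * Wv ε N (i-1) j) * (v (i-1) j)^2)
          = (if i = 0 then 0
              else ∑ j ∈ Finset.range ε, Wu ε N i j / (2 * Wv ε N (i-1) j) * (v (i-1) j)^2) := by
        intro i _
        split_ifs <;> simp
      rw [Finset.sum_congr rfl e0, shiftSum]
      refine Finset.sum_congr rfl fun i hi => ?_
      by_cases h : i + 1 < η
      · rw [if_pos h]
        refine Finset.sum_congr rfl fun j hj => ?_
        rw [if_pos h]
        simp only [Nat.add_sub_cancel]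
      · rw [if_neg h]
        symm
        refine Finset.sum_eq_zero fun j hj => ?_
        rw [if_neg h]
        simp
    have shift2 : (∑ i ∈ Finset.range η, ∑ j ∈ Finset.range ε,
          (if j = 0 then 0 else Wu ε N i j / (2 * Wv ε N i (j-1)) * (v i (j-1))^2))
        = ∑ i ∈ Finset.range η, ∑ j ∈ Finset.range ε,
          (if j + 1 < ε then Wu ε N i (j+1) else 0) / (2 * Wv ε N i j) * (v i j)^2 := by
      refine Finset.sum_congr rfl fun i hi => ?_
      rw [shiftSum]
      refine Finset.sum_congr rfl fun j hj => ?_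
      by_cases h : j + 1 < ε
      · rw [if_pos h, if_pos h]
        simp only [Nat.add_sub_cancel]
      · rw [if_neg h, if_neg h]
        simp
    rw [shift1] at bA1
    rw [shift2] at bA2
    have comb : (∑ i ∈ Finset.range η, ∑ j ∈ Finset.range ε,
          (if i = 0 then 0 else Wv ε N (i-1) j) / (2 * Wu ε N i j) * (u i j)^2)
        + (∑ i ∈ Finset.range η, ∑ j ∈ Finset.range ε,
          (if i + 1 < η then Wu ε N (i+1) j else 0) / (2 * Wv ε N i j) * (v i j)^2)
        + ((∑ i ∈ Finset.range η, ∑ j ∈ Finset.range ε,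
          (if j = 0 then 0 else Wv ε N i (j-1)) / (2 * Wu ε N i j) * (u i j)^2)
        + ∑ i ∈ Finset.range η, ∑ j ∈ Finset.range ε,
          (if j + 1 < ε then Wu ε N i (j+1) else 0) / (2 * Wv ε N i j) * (v i j)^2)
        ≤ C * ∑ i ∈ Finset.range η, ∑ j ∈ Finset.range ε, ((u i j)^2 + (v i j)^2) := by
      have merge : ∀ i ∈ Finset.range η, ∀ j ∈ Finset.range ε,
          (if i = 0 then 0 else Wv ε N (i-1) j) / (2 * Wu ε N i j) * (u i j)^2
          + (if i + 1 < η then Wu ε N (i+1) j else 0) / (2 * Wv ε N i j) * (v i j)^2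
          + ((if j = 0 then 0 else Wv ε N i (j-1)) / (2 * Wu ε N i j) * (u i j)^2
          + (if j + 1 < ε then Wu ε N i (j+1) else 0) / (2 * Wv ε N i j) * (v i j)^2)
          ≤ C * ((u i j)^2 + (v i j)^2) := by
        intro i hi j hj
        rw [Finset.mem_range] at hi hj
        have h1 : 0 < Wu ε N i j := Wu_pos hN hL hi hj
        have h2 : 0 < Wv ε N i j := Wv_pos hN hL hi hj
        have hLu := Lu hη hε hN hL hi hj
        have hLv := Lv hη hε hN hL hi hj
        have hu2 : ((if i = 0 then 0 else Wv ε N (i-1) j)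
            + (if j = 0 then 0 else Wv ε N i (j-1))) / (2 * Wu ε N i j) ≤ C := by
          rw [div_le_iff₀ (by positivity)]
          calc _ ≤ 2 * C * Wu ε N i j := hLu
            _ = C * (2 * Wu ε N i j) := by ring
        have hv2 : ((if i + 1 < η then Wu ε N (i+1) j else 0)
            + (if j + 1 < ε then Wu ε N i (j+1) else 0)) / (2 * Wv ε N i j) ≤ C := by
          rw [div_le_iff₀ (by positivity)]
          calc _ ≤ 2 * C * Wv ε N i j := hLv
            _ = C * (2 * Wv ε N i j) := by ring
        have e1 : (if i = 0 then 0 else Wv ε N (i-1) j) / (2 * Wu ε N i j) * (u i j)^2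
            + ((if j = 0 then 0 else Wv ε N i (j-1)) / (2 * Wu ε N i j) * (u i j)^2)
            = ((if i = 0 then 0 else Wv ε N (i-1) j)
              + (if j = 0 then 0 else Wv ε N i (j-1))) / (2 * Wu ε N i j) * (u i j)^2 := by
          rw [add_div, add_mul]
        have e2 : (if i + 1 < η then Wu ε N (i+1) j else 0) / (2 * Wv ε N i j) * (v i j)^2
            + ((if j + 1 < ε then Wu ε N i (j+1) else 0) / (2 * Wv ε N i j) * (v i j)^2)
            = ((if i + 1 < η then Wu ε N (i+1) j else 0)
              + (if j + 1 < ε then Wu ε N i (j+1) else 0)) / (2 * Wv ε N i j) * (v i j)^2 := by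
          rw [add_div, add_mul]
        calc _ = ((if i = 0 then 0 else Wv ε N (i-1) j)
              + (if j = 0 then 0 else Wv ε N i (j-1))) / (2 * Wu ε N i j) * (u i j)^2
            + ((if i + 1 < η then Wu ε N (i+1) j else 0)
              + (if j + 1 < ε then Wu ε N i (j+1) else 0)) / (2 * Wv ε N i j) * (v i j)^2 := by
              rw [← e1, ← e2]; ring
          _ ≤ C * (u i j)^2 + C * (v i j)^2 := by
              exact add_le_add (mul_le_mul_of_nonneg_right hu2 (sq_nonneg _))
                (mul_le_mul_of_nonneg_right hv2 (sq_nonneg _))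
          _ = C * ((u i j)^2 + (v i j)^2) := by ring
      calc _ = ∑ i ∈ Finset.range η, ∑ j ∈ Finset.range ε,
            ((if i = 0 then 0 else Wv ε N (i-1) j) / (2 * Wu ε N i j) * (u i j)^2
            + (if i + 1 < η then Wu ε N (i+1) j else 0) / (2 * Wv ε N i j) * (v i j)^2
            + ((if j = 0 then 0 else Wv ε N i (j-1)) / (2 * Wu ε N i j) * (u i j)^2
            + (if j + 1 < ε then Wu ε N i (j+1) else 0) / (2 * Wv ε N i j) * (v i j)^2)) := by
            simp only [Finset.sum_add_distrib]
        _ ≤ ∑ i ∈ Finset.range η, ∑ j ∈ Finset.range ε, C * ((u i j)^2 + (v i j)^2) := by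
            refine Finset.sum_le_sum fun i hi => Finset.sum_le_sum fun j hj => ?_
            exact merge i hi j hj
        _ = C * ∑ i ∈ Finset.range η, ∑ j ∈ Finset.range ε, ((u i j)^2 + (v i j)^2) := by
            simp only [Finset.mul_sum]
    calc A1 + A2 ≤ _ := add_le_add bA1 bA2
      _ ≤ _ := comb
  linarith

include hη hε hN hL in
lemma quadLower (u v : ℕ → ℕ → ℝ)
    (hu : ∀ i j, η ≤ i ∨ ε ≤ j → u i j = 0) :
    (2 - 2*Real.cos (Real.pi/N))
      * (∑ i ∈ Finset.range η, ∑ j ∈ Finset.range ε, ((u i j)^2 + (v i j)^2))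
    ≤ ∑ i ∈ Finset.range η, ∑ j ∈ Finset.range ε,
      (u i j * (2 * u i j + ((if i = 0 then 0 else v (i-1) j) + (if j = 0 then 0 else v i (j-1))))
        + v i j * (2 * v i j + (u (i+1) j + u i (j+1)))) := by
  have hcb := crossBound hη hε hN hL u (fun i j => - v i j) hu
  have e1 : ∑ i ∈ Finset.range η, ∑ j ∈ Finset.range ε,
      (u i j * ((if i = 0 then 0 else - v (i-1) j) + (if j = 0 then 0 else - v i (j-1)))
        + (- v i j) * (u (i+1) j + u i (j+1)))
      = - ∑ i ∈ Finset.range η, ∑ j ∈ Finset.range ε,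
      (u i j * ((if i = 0 then 0 else v (i-1) j) + (if j = 0 then 0 else v i (j-1)))
        + v i j * (u (i+1) j + u i (j+1))) := by
    rw [← Finset.sum_neg_distrib]
    refine Finset.sum_congr rfl fun i hi => ?_
    rw [← Finset.sum_neg_distrib]
    refine Finset.sum_congr rfl fun j hj => ?_
    split_ifs <;> ring
  have e2 : ∑ i ∈ Finset.range η, ∑ j ∈ Finset.range ε, ((u i j)^2 + ((- v i j))^2)
      = ∑ i ∈ Finset.range η, ∑ j ∈ Finset.range ε, ((u i j)^2 + (v i j)^2) := by
    refine Finset.sum_congr rfl fun i hi => Finset.sum_congr rfl fun j hj => ?_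
    ring
  rw [e1, e2] at hcb
  have expand : ∑ i ∈ Finset.range η, ∑ j ∈ Finset.range ε,
      (u i j * (2 * u i j + ((if i = 0 then 0 else v (i-1) j) + (if j = 0 then 0 else v i (j-1))))
        + v i j * (2 * v i j + (u (i+1) j + u i (j+1))))
      = 2 * (∑ i ∈ Finset.range η, ∑ j ∈ Finset.range ε, ((u i j)^2 + (v i j)^2))
        + ∑ i ∈ Finset.range η, ∑ j ∈ Finset.range ε,
          (u i j * ((if i = 0 then 0 else v (i-1) j) + (if j = 0 then 0 else v i (j-1)))
            + v i j * (u (i+1) j + u i (j+1))) := by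
    simp only [Finset.mul_sum, ← Finset.sum_add_distrib]
    refine Finset.sum_congr rfl fun i hi => Finset.sum_congr rfl fun j hj => ?_
    ring
  rw [expand]
  linarith

end Core
end St2

namespace St2
section Eig

noncomputable def yv (N p : ℕ) : ℝ := (-1)^p * Real.sin ((p : ℝ) * (Real.pi/N))
noncomputable def u0 (ε N k₀ i j : ℕ) : ℝ :=
  if i + j = k₀ then yv N (2*i+1 - smin ε k₀) else 0
noncomputable def v0 (ε N k₀ i j : ℕ) : ℝ :=
  if i + j + 1 = k₀ then yv N (2*i+2 - smin ε k₀) else 0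

lemma y0 (N : ℕ) : yv N 0 = 0 := by simp [yv]

lemma yN (N : ℕ) (hN : 0 < N) : yv N N = 0 := by
  have hNne : (N:ℝ) ≠ 0 := by positivity
  unfold yv
  have harg : (N:ℝ) * (Real.pi/N) = Real.pi := by field_simp
  rw [harg, Real.sin_pi, mul_zero]

lemma yrec (N p : ℕ) (hp : 1 ≤ p) :
    yv N (p-1) + yv N (p+1) = -(2 * Real.cos (Real.pi/N)) * yv N p := by
  obtain ⟨q, rfl⟩ : ∃ q, p = q + 1 := ⟨p-1, by omega⟩
  have h := sin_rec (q+1) (by omega) (Real.pi/N)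
  simp only [Nat.add_sub_cancel] at h ⊢
  unfold yv
  linear_combination ((-1:ℝ)^q) * h

variable {η ε N : ℕ} (hη : 0 < η) (hε : 0 < ε)
  (hNval : (ε = η ∧ N = 2*η) ∨ (ε ≠ η ∧ N = 2*(min ε η)+1))

lemma u0_eval {k₀ i j : ℕ} (h : i + j = k₀) :
    u0 ε N k₀ i j = yv N (2*i+1 - smin ε k₀) := by rw [u0, if_pos h]

lemma v0_eval {k₀ i j : ℕ} (h : i + j + 1 = k₀) :
    v0 ε N k₀ i j = yv N (2*i+2 - smin ε k₀) := by rw [v0, if_pos h]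

lemma sminmin : smin ε (min ε η) ≤ 1 ∧ (min ε η < ε → smin ε (min ε η) = 0)
    ∧ (¬(min ε η < ε) → smin ε (min ε η) = 1) := by
  unfold smin; split_ifs <;> omega

include hη hε hNval in
lemma u0_supp : ∀ i j, η ≤ i ∨ ε ≤ j → u0 ε N (min ε η) i j = 0 := by
  intro i j hij
  unfold u0 smin
  split_ifs with h1 h2
  · have harg : 2*i+1 - 0 = N ∨ 2*i+1-0 = 0 := by
      rcases hNval with ⟨he, hn⟩ | ⟨he, hn⟩ <;> omega
    rcases harg with h | h
    · rw [h]; exact yN N (by rcases hNval with ⟨he, hn⟩ | ⟨he, hn⟩ <;> omega)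
    · rw [h]; exact y0 N
  · have harg : 2*i+1 - (2*(min ε η - ε)+1) = N ∨ 2*i+1 - (2*(min ε η - ε)+1) = 0 := by
      rcases hNval with ⟨he, hn⟩ | ⟨he, hn⟩ <;> omega
    rcases harg with h | h
    · rw [h]; exact yN N (by rcases hNval with ⟨he, hn⟩ | ⟨he, hn⟩ <;> omega)
    · rw [h]; exact y0 N
  · rfl

include hη hε hNval in
lemma eigU {i j : ℕ} (hi : i < η) (hj : j < ε) :
    2 * u0 ε N (min ε η) i j
      + ((if i = 0 then 0 else v0 ε N (min ε η) (i-1) j)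
        + (if j = 0 then 0 else v0 ε N (min ε η) i (j-1)))
      = (2 - 2*Real.cos (Real.pi/N)) * u0 ε N (min ε η) i j := by
  have hk1 : 1 ≤ min ε η := by omega
  obtain ⟨hSle, hSf1, hSf2⟩ := sminmin (η := η) (ε := ε)
  by_cases h : i + j = min ε η
  · by_cases hi0 : i = 0
    · subst hi0
      have hkε : min ε η < ε := by omega
      have hS : smin ε (min ε η) = 0 := hSf1 hkε
      have hjne : ¬ (j = 0) := by omega
      rw [if_pos rfl, if_neg hjne]
      have e1 : u0 ε N (min ε η) 0 j = yv N 1 := by rw [u0_eval h, hS]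
      have e2 : v0 ε N (min ε η) 0 (j-1) = yv N 2 := by
        rw [v0_eval (by omega), hS]
      rw [e1, e2]
      have hr := yrec N 1 le_rfl
      have hy0 := y0 N
      norm_num at hr
      linear_combination hr - hy0
    · by_cases hj0 : j = 0
      · subst hj0
        have hεη : ε < η := by
          rcases hNval with ⟨he, hn⟩ | ⟨he, hn⟩ <;> omega
        have hS : smin ε (min ε η) = 1 := hSf2 (by omega)
        have hNe : N = 2*ε+1 := by
          rcases hNval with ⟨he, hn⟩ | ⟨he, hn⟩ <;> omega
        rw [if_neg hi0, if_pos rfl]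
        have e1 : u0 ε N (min ε η) i 0 = yv N (2*ε) := by
          rw [u0_eval h, hS]; congr 1; omega
        have e2 : v0 ε N (min ε η) (i-1) 0 = yv N (2*ε - 1) := by
          rw [v0_eval (by omega), hS]; congr 1; omega
        rw [e1, e2]
        have hr := yrec N (2*ε) (by omega)
        have hyN : yv N (2*ε+1) = 0 := by rw [← hNe]; exact yN N (by omega)
        rw [hyN] at hr
        linear_combination hr
      · rw [if_neg hi0, if_neg hj0]
        obtain ⟨p, hp⟩ : ∃ p, p = 2*i+1 - smin ε (min ε η) := ⟨_, rfl⟩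
        have hp1 : 1 ≤ p := by omega
        have e1 : u0 ε N (min ε η) i j = yv N p := by rw [u0_eval h]; congr 1; omega
        have e2 : v0 ε N (min ε η) (i-1) j = yv N (p-1) := by
          rw [v0_eval (by omega)]; congr 1; omega
        have e3 : v0 ε N (min ε η) i (j-1) = yv N (p+1) := by
          rw [v0_eval (by omega)]; congr 1; omega
        rw [e1, e2, e3]
        linear_combination yrec N p hp1
  · have e0 : u0 ε N (min ε η) i j = 0 := by rw [u0, if_neg h]
    have e1 : (if i = 0 then (0:ℝ) else v0 ε N (min ε η) (i-1) j) = 0 := by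
      split_ifs with h1
      · rfl
      · rw [v0, if_neg (by omega)]
    have e2 : (if j = 0 then (0:ℝ) else v0 ε N (min ε η) i (j-1)) = 0 := by
      split_ifs with h1
      · rfl
      · rw [v0, if_neg (by omega)]
    rw [e0, e1, e2]; ring

include hη hε hNval in
lemma eigV {i j : ℕ} (hi : i < η) (hj : j < ε) :
    2 * v0 ε N (min ε η) i j
      + (u0 ε N (min ε η) (i+1) j + u0 ε N (min ε η) i (j+1))
      = (2 - 2*Real.cos (Real.pi/N)) * v0 ε N (min ε η) i j := by
  obtain ⟨hSle, hSf1, hSf2⟩ := sminmin (η := η) (ε := ε)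
  by_cases h : i + j + 1 = min ε η
  · obtain ⟨p, hp⟩ : ∃ p, p = 2*i+2 - smin ε (min ε η) := ⟨_, rfl⟩
    have hp1 : 1 ≤ p := by omega
    have e1 : v0 ε N (min ε η) i j = yv N p := by rw [v0_eval h]; congr 1; omega
    have e2 : u0 ε N (min ε η) (i+1) j = yv N (p+1) := by
      rw [u0_eval (by omega)]; congr 1; omega
    have e3 : u0 ε N (min ε η) i (j+1) = yv N (p-1) := by
      rw [u0_eval (by omega)]; congr 1; omega
    rw [e1, e2, e3]
    linear_combination yrec N p hp1
  · have e0 : v0 ε N (min ε η) i j = 0 := by rw [v0, if_neg h]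
    have e1 : u0 ε N (min ε η) (i+1) j = 0 := by rw [u0, if_neg (by omega)]
    have e2 : u0 ε N (min ε η) i (j+1) = 0 := by rw [u0, if_neg (by omega)]
    rw [e0, e1, e2]; ring

include hη hε hNval in
lemma v0_ne : v0 ε N (min ε η) 0 (min ε η - 1) ≠ 0 := by
  have hk1 : 1 ≤ min ε η := by omega
  obtain ⟨hSle, hSf1, hSf2⟩ := sminmin (η := η) (ε := ε)
  rw [v0, if_pos (by omega)]
  unfold yv
  apply mul_ne_zero
  · exact pow_ne_zero _ (by norm_num)
  · have h1 : 1 ≤ 2*0+2 - smin ε (min ε η) := by omega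
    have h2 : 2*0+2 - smin ε (min ε η) < N := by
      by_cases hc : min ε η < ε
      · have hS := hSf1 hc
        rcases hNval with ⟨he, hn⟩ | ⟨he, hn⟩ <;> omega
      · have hS := hSf2 hc
        rcases hNval with ⟨he, hn⟩ | ⟨he, hn⟩ <;> omega
    have hN0 : 0 < N := by omega
    exact ne_of_gt (sin_pos_aux N hN0 _ h1 h2)

end Eig
end St2

open Matrix
open scoped Kronecker
namespace St2

abbrev RT (η m ε n : ℕ) := (Fin η × (Fin m × (Fin ε × Fin n))) ⊕ (Fin η × (Fin m × (Fin ε × Fin n)))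
abbrev CT (η m ε n : ℕ) :=
  (Fin (η+1) × (Fin m × (Fin ε × Fin n))) ⊕ (Fin η × (Fin m × (Fin (ε+1) × Fin n)))

noncomputable def Smat (η m ε n : ℕ) : Matrix (RT η m ε n) (CT η m ε n) ℝ :=
  Matrix.fromBlocks
      (Ek ℝ η ⊗ₖ (1 : Matrix (Fin m × (Fin ε × Fin n)) (Fin m × (Fin ε × Fin n)) ℝ))
      ((1 : Matrix (Fin η) (Fin η) ℝ) ⊗ₖ ((1 : Matrix (Fin m) (Fin m) ℝ) ⊗ₖ
        (Ek ℝ ε ⊗ₖ (1 : Matrix (Fin n) (Fin n) ℝ))))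
      (Fk ℝ η ⊗ₖ (1 : Matrix (Fin m × (Fin ε × Fin n)) (Fin m × (Fin ε × Fin n)) ℝ))
      ((1 : Matrix (Fin η) (Fin η) ℝ) ⊗ₖ ((1 : Matrix (Fin m) (Fin m) ℝ) ⊗ₖ
        (Fk ℝ ε ⊗ₖ (1 : Matrix (Fin n) (Fin n) ℝ))))

section collapse

lemma collapseA {A B C : Type*} [Fintype A] [DecidableEq A] [Fintype B] [DecidableEq B]
    [Fintype C] (p : C → Prop) [DecidablePred p] (ia : A) (ab : B) (f : A → B → C → ℝ) :
    (∑ x : A, ∑ y : B, ∑ z : C, if p z then if y = ab then if x = ia then f x y z else 0 else 0 else 0)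
      = ∑ z : C, if p z then f ia ab z else 0 := by
  refine (Finset.sum_eq_single ia (fun x _ hx => ?_)
      (fun h => absurd (Finset.mem_univ ia) h)).trans ?_
  · exact Finset.sum_eq_zero fun y _ => Finset.sum_eq_zero fun z _ => by simp [hx]
  · refine (Finset.sum_eq_single ab (fun y _ hy => ?_)
        (fun h => absurd (Finset.mem_univ ab) h)).trans ?_
    · exact Finset.sum_eq_zero fun z _ => by simp [hy]
    · exact Finset.sum_congr rfl fun z _ => by simp

lemma collapseB {A B C : Type*} [Fintype A] [DecidableEq A] [Fintype B] [DecidableEq B]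
    [Fintype C] (p : C → Prop) [DecidablePred p] (ia : A) (ab : B) (f : A → B → C → ℝ) :
    (∑ x : A, ∑ y : B, ∑ z : C, if p z then if ab = y then if ia = x then f x y z else 0 else 0 else 0)
      = ∑ z : C, if p z then f ia ab z else 0 := by
  refine (Finset.sum_eq_single ia (fun x _ hx => ?_)
      (fun h => absurd (Finset.mem_univ ia) h)).trans ?_
  · exact Finset.sum_eq_zero fun y _ => Finset.sum_eq_zero fun z _ => by simp [Ne.symm hx]
  · refine (Finset.sum_eq_single ab (fun y _ hy => ?_)
        (fun h => absurd (Finset.mem_univ ab) h)).trans ?_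
    · exact Finset.sum_eq_zero fun z _ => by simp [Ne.symm hy]
    · exact Finset.sum_congr rfl fun z _ => by simp

lemma fin_collapse1 {K : ℕ} (f : Fin K → ℝ) (t : ℕ) :
    (∑ i : Fin K, if t = (i : ℕ) then f i else 0) = if h : t < K then f ⟨t, h⟩ else 0 := by
  by_cases h : t < K
  · rw [dif_pos h]
    refine (Finset.sum_eq_single ⟨t, h⟩ (fun b _ hb => ?_)
        (fun hmem => absurd (Finset.mem_univ _) hmem)).trans ?_
    · exact if_neg (fun hc => hb (Fin.ext (by simp only [Fin.val_mk]; omega)))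
    · exact if_pos rfl
  · rw [dif_neg h]
    exact Finset.sum_eq_zero fun i _ => if_neg (fun hc => h (by rw [hc]; exact i.isLt))

lemma fin_collapse1' {K : ℕ} (f : Fin K → ℝ) (t : ℕ) :
    (∑ i : Fin K, if (i : ℕ) = t then f i else 0) = if h : t < K then f ⟨t, h⟩ else 0 := by
  rw [← fin_collapse1]
  refine Finset.sum_congr rfl fun i _ => ?_
  by_cases h : (i:ℕ) = t
  · rw [if_pos h, if_pos h.symm]
  · rw [if_neg h, if_neg (fun hc => h hc.symm)]

lemma fin_collapse2 {K : ℕ} (f : Fin K → ℝ) (t : ℕ) :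
    (∑ i : Fin K, if t = (i : ℕ) + 1 then f i else 0)
      = if h : t - 1 < K ∧ t ≠ 0 then f ⟨t-1, h.1⟩ else 0 := by
  by_cases h : t - 1 < K ∧ t ≠ 0
  · obtain ⟨h1, h2⟩ := h
    rw [dif_pos ⟨h1, h2⟩]
    refine (Finset.sum_eq_single ⟨t-1, h1⟩ (fun b _ hb => ?_)
        (fun hmem => absurd (Finset.mem_univ _) hmem)).trans ?_
    · exact if_neg (fun hc => hb (Fin.ext (by simp only [Fin.val_mk]; omega)))
    · exact if_pos (by simp only [Fin.val_mk]; omega)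
  · rw [dif_neg h]
    refine Finset.sum_eq_zero fun i _ => if_neg fun hc => ?_
    have := i.isLt; omega

end collapse

variable {η m ε n : ℕ}

noncomputable def ubar (x : RT η m ε n → ℝ) (i a j b : ℕ) : ℝ :=
  if h : i < η ∧ a < m ∧ j < ε ∧ b < n
  then x (Sum.inl (⟨i, h.1⟩, ⟨a, h.2.1⟩, ⟨j, h.2.2.1⟩, ⟨b, h.2.2.2⟩)) else 0

noncomputable def vbar (x : RT η m ε n → ℝ) (i a j b : ℕ) : ℝ :=
  if h : i < η ∧ a < m ∧ j < ε ∧ b < n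
  then x (Sum.inr (⟨i, h.1⟩, ⟨a, h.2.1⟩, ⟨j, h.2.2.1⟩, ⟨b, h.2.2.2⟩)) else 0

lemma ubar_apply (x : RT η m ε n → ℝ) (i : Fin η) (a : Fin m) (j : Fin ε) (b : Fin n) :
    ubar x ↑i ↑a ↑j ↑b = x (Sum.inl (i, (a, (j, b)))) := by
  rw [ubar, dif_pos ⟨i.isLt, a.isLt, j.isLt, b.isLt⟩]

lemma vbar_apply (x : RT η m ε n → ℝ) (i : Fin η) (a : Fin m) (j : Fin ε) (b : Fin n) :
    vbar x ↑i ↑a ↑j ↑b = x (Sum.inr (i, (a, (j, b)))) := by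
  rw [vbar, dif_pos ⟨i.isLt, a.isLt, j.isLt, b.isLt⟩]

lemma expand1 (x : RT η m ε n → ℝ) (s : Fin (η+1)) (a : Fin m) (j : Fin ε) (b : Fin n) :
    ((Smat η m ε n)ᴴ *ᵥ x) (Sum.inl (s, (a, (j, b))))
    = (∑ i : Fin η, if (s:ℕ) = (i:ℕ) then x (Sum.inl (i, (a, (j, b)))) else 0)
      + (∑ i : Fin η, if (s:ℕ) = (i:ℕ) + 1 then x (Sum.inr (i, (a, (j, b)))) else 0) := by
  simp [Matrix.mulVec, dotProduct, Fintype.sum_sum_type, Smat, Ek, Fk,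
    Matrix.one_apply, Fintype.sum_prod_type, ite_mul, mul_ite]

lemma expand2 (x : RT η m ε n → ℝ) (i : Fin η) (a : Fin m) (t : Fin (ε+1)) (b : Fin n) :
    ((Smat η m ε n)ᴴ *ᵥ x) (Sum.inr (i, (a, (t, b))))
    = (∑ j : Fin ε, if (t:ℕ) = (j:ℕ) then x (Sum.inl (i, (a, (j, b)))) else 0)
      + (∑ j : Fin ε, if (t:ℕ) = (j:ℕ) + 1 then x (Sum.inr (i, (a, (j, b)))) else 0) := by
  simp only [Matrix.mulVec, dotProduct, Fintype.sum_sum_type, Smat, Ek, Fk,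
    Matrix.conjTranspose_apply, Matrix.fromBlocks_apply₁₂, Matrix.fromBlocks_apply₂₂,
    Matrix.kroneckerMap_apply, Matrix.one_apply, Matrix.of_apply, star_trivial,
    Fintype.sum_prod_type, ite_mul, mul_ite, mul_one, mul_zero, one_mul, zero_mul,
    Finset.sum_ite_eq, Finset.sum_ite_eq', Finset.mem_univ, if_true, Finset.sum_const_zero]
  rw [collapseA (fun z : Fin ε => (t:ℕ) = (z:ℕ)) i a (fun x' y z => x (Sum.inl (x', (y, (z, b))))),
    collapseA (fun z : Fin ε => (t:ℕ) = (z:ℕ)+1) i a (fun x' y z => x (Sum.inr (x', (y, (z, b)))))]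

lemma expand3 (w : CT η m ε n → ℝ) (i : Fin η) (a : Fin m) (j : Fin ε) (b : Fin n) :
    (Smat η m ε n *ᵥ w) (Sum.inl (i, (a, (j, b))))
    = (∑ s : Fin (η+1), if (s:ℕ) = (i:ℕ) then w (Sum.inl (s, (a, (j, b)))) else 0)
      + (∑ t : Fin (ε+1), if (t:ℕ) = (j:ℕ) then w (Sum.inr (i, (a, (t, b)))) else 0) := by
  simp only [Matrix.mulVec, dotProduct, Fintype.sum_sum_type, Smat, Ek, Fk,
    Matrix.fromBlocks_apply₁₁, Matrix.fromBlocks_apply₁₂,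
    Matrix.kroneckerMap_apply, Matrix.one_apply, Matrix.of_apply,
    Fintype.sum_prod_type, ite_mul, mul_ite, mul_one, mul_zero, one_mul, zero_mul,
    Finset.sum_ite_eq, Finset.sum_ite_eq', Finset.mem_univ, if_true, Finset.sum_const_zero]
  rw [collapseB (fun z : Fin (ε+1) => (z:ℕ) = (j:ℕ)) i a
      (fun x' y z => w (Sum.inr (x', (y, (z, b)))))]

lemma expand4 (w : CT η m ε n → ℝ) (i : Fin η) (a : Fin m) (j : Fin ε) (b : Fin n) :
    (Smat η m ε n *ᵥ w) (Sum.inr (i, (a, (j, b))))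
    = (∑ s : Fin (η+1), if (s:ℕ) = (i:ℕ)+1 then w (Sum.inl (s, (a, (j, b)))) else 0)
      + (∑ t : Fin (ε+1), if (t:ℕ) = (j:ℕ)+1 then w (Sum.inr (i, (a, (t, b)))) else 0) := by
  simp only [Matrix.mulVec, dotProduct, Fintype.sum_sum_type, Smat, Ek, Fk,
    Matrix.fromBlocks_apply₂₁, Matrix.fromBlocks_apply₂₂,
    Matrix.kroneckerMap_apply, Matrix.one_apply, Matrix.of_apply,
    Fintype.sum_prod_type, ite_mul, mul_ite, mul_one, mul_zero, one_mul, zero_mul,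
    Finset.sum_ite_eq, Finset.sum_ite_eq', Finset.mem_univ, if_true, Finset.sum_const_zero]
  rw [collapseB (fun z : Fin (ε+1) => (z:ℕ) = (j:ℕ)+1) i a
      (fun x' y z => w (Sum.inr (x', (y, (z, b)))))]

lemma wform_inl (x : RT η m ε n → ℝ) (s : Fin (η+1)) (a : Fin m) (j : Fin ε) (b : Fin n) :
    ((Smat η m ε n)ᴴ *ᵥ x) (Sum.inl (s, (a, (j, b))))
      = ubar x ↑s ↑a ↑j ↑b + (if (s:ℕ) = 0 then 0 else vbar x ((s:ℕ)-1) ↑a ↑j ↑b) := by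
  rw [expand1, fin_collapse1, fin_collapse2]
  congr 1
  · by_cases h : (s:ℕ) < η
    · rw [dif_pos h, ubar, dif_pos ⟨h, a.isLt, j.isLt, b.isLt⟩]
    · rw [dif_neg h, ubar, dif_neg (by tauto)]
  · by_cases h0 : (s:ℕ) = 0
    · rw [if_pos h0, dif_neg (by tauto)]
    · have hlt : (s:ℕ) - 1 < η := by have := s.isLt; omega
      rw [if_neg h0, dif_pos ⟨hlt, h0⟩, vbar, dif_pos ⟨hlt, a.isLt, j.isLt, b.isLt⟩]

lemma wform_inr (x : RT η m ε n → ℝ) (i : Fin η) (a : Fin m) (t : Fin (ε+1)) (b : Fin n) :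
    ((Smat η m ε n)ᴴ *ᵥ x) (Sum.inr (i, (a, (t, b))))
      = ubar x ↑i ↑a ↑t ↑b + (if (t:ℕ) = 0 then 0 else vbar x ↑i ↑a ((t:ℕ)-1) ↑b) := by
  rw [expand2, fin_collapse1, fin_collapse2]
  congr 1
  · by_cases h : (t:ℕ) < ε
    · rw [dif_pos h, ubar, dif_pos ⟨i.isLt, a.isLt, h, b.isLt⟩]
    · rw [dif_neg h, ubar, dif_neg (by tauto)]
  · by_cases h0 : (t:ℕ) = 0
    · rw [if_pos h0, dif_neg (by tauto)]
    · have hlt : (t:ℕ) - 1 < ε := by have := t.isLt; omega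
      rw [if_neg h0, dif_pos ⟨hlt, h0⟩, vbar, dif_pos ⟨i.isLt, a.isLt, hlt, b.isLt⟩]

noncomputable def yform (x : RT η m ε n → ℝ) : RT η m ε n → ℝ :=
  Sum.elim
    (fun r => 2 * ubar x ↑r.1 ↑r.2.1 ↑r.2.2.1 ↑r.2.2.2
      + ((if (r.1:ℕ) = 0 then 0 else vbar x ((r.1:ℕ)-1) ↑r.2.1 ↑r.2.2.1 ↑r.2.2.2)
        + (if (r.2.2.1:ℕ) = 0 then 0 else vbar x ↑r.1 ↑r.2.1 ((r.2.2.1:ℕ)-1) ↑r.2.2.2)))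
    (fun r => 2 * vbar x ↑r.1 ↑r.2.1 ↑r.2.2.1 ↑r.2.2.2
      + (ubar x ((r.1:ℕ)+1) ↑r.2.1 ↑r.2.2.1 ↑r.2.2.2 + ubar x ↑r.1 ↑r.2.1 ((r.2.2.1:ℕ)+1) ↑r.2.2.2))

lemma Amul_apply (x : RT η m ε n → ℝ) (r : RT η m ε n) :
    ((Smat η m ε n * (Smat η m ε n)ᴴ) *ᵥ x) r = yform x r := by
  rw [← Matrix.mulVec_mulVec]
  rcases r with ⟨i, a, j, b⟩ | ⟨i, a, j, b⟩
  · rw [expand3, fin_collapse1', fin_collapse1',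
      dif_pos (show (i:ℕ) < η + 1 from Nat.lt_succ_of_lt i.isLt),
      dif_pos (show (j:ℕ) < ε + 1 from Nat.lt_succ_of_lt j.isLt),
      wform_inl, wform_inr]
    show _ = 2 * ubar x ↑i ↑a ↑j ↑b
      + ((if (i:ℕ) = 0 then 0 else vbar x ((i:ℕ)-1) ↑a ↑j ↑b)
        + (if (j:ℕ) = 0 then 0 else vbar x ↑i ↑a ((j:ℕ)-1) ↑b))
    push_cast
    ring
  · rw [expand4, fin_collapse1', fin_collapse1',
      dif_pos (show (i:ℕ)+1 < η + 1 from Nat.succ_lt_succ i.isLt),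
      dif_pos (show (j:ℕ)+1 < ε + 1 from Nat.succ_lt_succ j.isLt),
      wform_inl, wform_inr]
    show _ = 2 * vbar x ↑i ↑a ↑j ↑b
      + (ubar x ((i:ℕ)+1) ↑a ↑j ↑b + ubar x ↑i ↑a ((j:ℕ)+1) ↑b)
    rw [if_neg (by simp : ¬((⟨(i:ℕ)+1, Nat.succ_lt_succ i.isLt⟩ : Fin (η+1)) : ℕ) = 0),
      if_neg (by simp : ¬((⟨(j:ℕ)+1, Nat.succ_lt_succ j.isLt⟩ : Fin (ε+1)) : ℕ) = 0)]
    show ubar x ((i:ℕ)+1) ↑a ↑j ↑b + vbar x ((i:ℕ)+1-1) ↑a ↑j ↑b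
      + (ubar x ↑i ↑a ((j:ℕ)+1) ↑b + vbar x ↑i ↑a ((j:ℕ)+1-1) ↑b) = _
    simp only [Nat.add_sub_cancel]
    ring

end St2

namespace St2

section Spectral
variable {I : Type*} [Fintype I] [DecidableEq I]

lemma dot_self_eq_sum_sq (w : I → ℝ) : w ⬝ᵥ w = ∑ i, w i ^ 2 := by
  simp [dotProduct, sq]

lemma eig_lower_bound [Nonempty I] (A : Matrix I I ℝ) (hA : A.IsHermitian) (c : ℝ)
    (h : ∀ x : I → ℝ, c * (∑ i, x i ^ 2) ≤ x ⬝ᵥ (A *ᵥ x)) (i : I) :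
    c ≤ hA.eigenvalues i := by
  have hv := hA.mulVec_eigenvectorBasis i
  have hnorm : ∑ k, (hA.eigenvectorBasis i) k ^ 2 = 1 := by
    have h1 : ‖hA.eigenvectorBasis i‖ = 1 := hA.eigenvectorBasis.orthonormal.1 i
    have h2 := EuclideanSpace.norm_eq (hA.eigenvectorBasis i)
    rw [h1] at h2
    have h3 : (∑ k, ‖(hA.eigenvectorBasis i) k‖ ^ 2) = 1 := Real.sqrt_eq_one.mp h2.symm
    simpa [Real.norm_eq_abs, sq_abs] using h3
  have hv' : (A *ᵥ fun k => hA.eigenvectorBasis i k)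
      = fun k => hA.eigenvalues i * hA.eigenvectorBasis i k := hv
  have hq := h (fun k => hA.eigenvectorBasis i k)
  rw [hv'] at hq
  have hd : ((fun k => hA.eigenvectorBasis i k) : I → ℝ)
        ⬝ᵥ (fun k => hA.eigenvalues i * hA.eigenvectorBasis i k)
      = hA.eigenvalues i * ∑ k, (hA.eigenvectorBasis i) k ^ 2 := by
    simp only [dotProduct, Finset.mul_sum, sq]
    exact Finset.sum_congr rfl fun k _ => by ring
  rw [hd, hnorm] at hq
  simp only [hnorm, mul_one] at hq
  linarith

lemma rayleigh_inf_le (A : Matrix I I ℝ) (hA : A.IsHermitian) [Nonempty I] (x : I → ℝ) :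
    (⨅ i, hA.eigenvalues i) * (∑ i, x i ^ 2) ≤ x ⬝ᵥ (A *ᵥ x) := by
  set U : Matrix I I ℝ := ↑(hA.eigenvectorUnitary) with hU
  have hstar : star U = Uᵀ := by
    ext i j
    simp [Matrix.star_apply]
  have hUU : U * star U = 1 := (Matrix.mem_unitaryGroup_iff).mp (hA.eigenvectorUnitary).2
  set z : I → ℝ := Uᵀ *ᵥ x with hz
  have hspec := hA.spectral_theorem
  rw [Unitary.conjStarAlgAut_apply] at hspec
  have hD : (Matrix.diagonal (RCLike.ofReal ∘ hA.eigenvalues) : Matrix I I ℝ)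
      = Matrix.diagonal hA.eigenvalues := by
    congr 1
  have e1 : x ⬝ᵥ (A *ᵥ x) = z ⬝ᵥ (Matrix.diagonal hA.eigenvalues *ᵥ z) := by
    calc x ⬝ᵥ (A *ᵥ x)
        = x ⬝ᵥ ((U * Matrix.diagonal hA.eigenvalues * star U) *ᵥ x) := by
          rw [← hD, ← hspec]
      _ = x ⬝ᵥ (U *ᵥ (Matrix.diagonal hA.eigenvalues *ᵥ (star U *ᵥ x))) := by
          rw [Matrix.mulVec_mulVec, Matrix.mulVec_mulVec]
      _ = (x ᵥ* U) ⬝ᵥ (Matrix.diagonal hA.eigenvalues *ᵥ (star U *ᵥ x)) :=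
          Matrix.dotProduct_mulVec _ _ _
      _ = z ⬝ᵥ (Matrix.diagonal hA.eigenvalues *ᵥ z) := by
          rw [hstar, hz, Matrix.mulVec_transpose]
  have e2 : ∑ i, z i ^ 2 = ∑ i, x i ^ 2 := by
    rw [← dot_self_eq_sum_sq, ← dot_self_eq_sum_sq]
    calc z ⬝ᵥ z = (x ᵥ* U) ⬝ᵥ z := by rw [hz, Matrix.mulVec_transpose]
      _ = x ⬝ᵥ (U *ᵥ z) := (Matrix.dotProduct_mulVec _ _ _).symm
      _ = x ⬝ᵥ ((U * Uᵀ) *ᵥ x) := by rw [hz, Matrix.mulVec_mulVec]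
      _ = x ⬝ᵥ (1 *ᵥ x) := by rw [← hstar, hUU]
      _ = x ⬝ᵥ x := by rw [Matrix.one_mulVec]
  have hbdd : BddBelow (Set.range hA.eigenvalues) := Set.Finite.bddBelow (Set.finite_range _)
  have e3 : z ⬝ᵥ (Matrix.diagonal hA.eigenvalues *ᵥ z)
      = ∑ i, hA.eigenvalues i * z i ^ 2 := by
    simp [dotProduct, Matrix.mulVec_diagonal, sq]
    exact Finset.sum_congr rfl fun i _ => by ring
  rw [e1, e3, ← e2, Finset.mul_sum]
  refine Finset.sum_le_sum fun i _ => ?_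
  exact mul_le_mul_of_nonneg_right (ciInf_le hbdd i) (sq_nonneg _)

lemma eig_inf_le (A : Matrix I I ℝ) (hA : A.IsHermitian) [Nonempty I]
    (x : I → ℝ) (c : ℝ) (hx : 0 < ∑ i, x i ^ 2) (heig : A *ᵥ x = c • x) :
    (⨅ i, hA.eigenvalues i) ≤ c := by
  have key := rayleigh_inf_le A hA x
  rw [heig, dotProduct_smul, smul_eq_mul, dot_self_eq_sum_sq] at key
  exact le_of_mul_le_mul_right key hx

end Spectral

lemma chord {x : ℝ} (h1 : 0 ≤ x) (h2 : x ≤ Real.pi/4) :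
    2 * Real.sqrt 2 / Real.pi * x ≤ Real.sin x := by
  have hπ := Real.pi_pos
  have ht0 : 0 ≤ 4*x/Real.pi := by positivity
  have ht1 : 4*x/Real.pi ≤ 1 := by
    rw [div_le_one hπ]; linarith
  have h := strictConcaveOn_sin_Icc.concaveOn.2 (x := 0) (y := Real.pi/4)
    (Set.mem_Icc.mpr ⟨le_rfl, Real.pi_pos.le⟩)
    (Set.mem_Icc.mpr ⟨by positivity, by linarith⟩)
    (sub_nonneg.2 ht1) ht0 (by ring)
  rw [smul_eq_mul, smul_eq_mul, smul_eq_mul, smul_eq_mul, Real.sin_zero,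
    Real.sin_pi_div_four, mul_zero, zero_add] at h
  have harg : (0:ℝ) + 4*x/Real.pi * (Real.pi/4) = x := by
    field_simp; ring
  rw [harg] at h
  calc 2 * Real.sqrt 2 / Real.pi * x = 4*x/Real.pi * (Real.sqrt 2/2) := by
        field_simp; ring
    _ ≤ Real.sin x := h

lemma sqrt_c (N : ℕ) (hN : 2 ≤ N) :
    Real.sqrt (2 - 2*Real.cos (Real.pi/N)) = 2 * Real.sin (Real.pi/(2*N)) := by
  have hN0 : (0:ℝ) < N := by exact_mod_cast (by omega : 0 < N)
  have harg : Real.pi / N = 2 * (Real.pi/(2*N)) := by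
    field_simp
  have hsin : 0 ≤ Real.sin (Real.pi/(2*N)) := by
    apply Real.sin_nonneg_of_nonneg_of_le_pi
    · positivity
    · rw [div_le_iff₀ (by positivity)]
      have h2N : (2:ℝ) ≤ N := by exact_mod_cast hN
      nlinarith [Real.pi_pos]
  rw [harg, Real.cos_two_mul]
  have hkey : 2 - 2*(2*Real.cos (Real.pi/(2*N))^2 - 1) = (2*Real.sin (Real.pi/(2*N)))^2 := by
    have := Real.sin_sq_add_cos_sq (Real.pi/(2*N))
    nlinarith
  rw [hkey, Real.sqrt_sq (by positivity)]

end St2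

namespace St2

section Main
variable {η m ε n N : ℕ}

noncomputable def x0 (η m ε n N : ℕ) : RT η m ε n → ℝ :=
  Sum.elim
    (fun r => if (r.2.1:ℕ) = 0 ∧ (r.2.2.2:ℕ) = 0 then u0 ε N (min ε η) ↑r.1 ↑r.2.2.1 else 0)
    (fun r => if (r.2.1:ℕ) = 0 ∧ (r.2.2.2:ℕ) = 0 then v0 ε N (min ε η) ↑r.1 ↑r.2.2.1 else 0)

variable (hη : 0 < η) (hm : 0 < m) (hε : 0 < ε) (hn : 0 < n)
  (hNval : (ε = η ∧ N = 2*η) ∨ (ε ≠ η ∧ N = 2*(min ε η)+1))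

lemma v0_supp (i j : ℕ) (hij : η ≤ i ∨ ε ≤ j) : v0 ε N (min ε η) i j = 0 := by
  rw [v0, if_neg (by omega)]

include hη hm hε hn hNval in
lemma ubar_x0 (i a j b : ℕ) :
    ubar (x0 η m ε n N) i a j b = if a = 0 ∧ b = 0 then u0 ε N (min ε η) i j else 0 := by
  rw [ubar]
  by_cases hr : i < η ∧ a < m ∧ j < ε ∧ b < n
  · rw [dif_pos hr]
    rfl
  · rw [dif_neg hr]
    by_cases hab : a = 0 ∧ b = 0
    · rw [if_pos hab]
      obtain ⟨ha0, hb0⟩ := hab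
      subst ha0; subst hb0
      exact (u0_supp hη hε hNval i j (by omega)).symm
    · rw [if_neg hab]

include hη hm hε hn hNval in
lemma vbar_x0 (i a j b : ℕ) :
    vbar (x0 η m ε n N) i a j b = if a = 0 ∧ b = 0 then v0 ε N (min ε η) i j else 0 := by
  rw [vbar]
  by_cases hr : i < η ∧ a < m ∧ j < ε ∧ b < n
  · rw [dif_pos hr]
    rfl
  · rw [dif_neg hr]
    by_cases hab : a = 0 ∧ b = 0
    · rw [if_pos hab]
      obtain ⟨ha0, hb0⟩ := hab
      subst ha0; subst hb0
      exact (v0_supp i j (by omega)).symm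
    · rw [if_neg hab]

include hη hm hε hn hNval in
lemma Ax0 : (Smat η m ε n * (Smat η m ε n)ᴴ) *ᵥ (x0 η m ε n N)
    = (2 - 2*Real.cos (Real.pi/N)) • (x0 η m ε n N) := by
  funext r
  rw [Pi.smul_apply, smul_eq_mul, Amul_apply]
  rcases r with ⟨i, a, j, b⟩ | ⟨i, a, j, b⟩
  · show 2 * ubar (x0 η m ε n N) ↑i ↑a ↑j ↑b
      + ((if (i:ℕ) = 0 then 0 else vbar (x0 η m ε n N) ((i:ℕ)-1) ↑a ↑j ↑b)
        + (if (j:ℕ) = 0 then 0 else vbar (x0 η m ε n N) ↑i ↑a ((j:ℕ)-1) ↑b))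
      = _ * x0 η m ε n N (Sum.inl (i, (a, (j, b))))
    rw [ubar_x0 hη hm hε hn hNval, vbar_x0 hη hm hε hn hNval, vbar_x0 hη hm hε hn hNval]
    have hx : x0 η m ε n N (Sum.inl (i, (a, (j, b))))
        = if (a:ℕ) = 0 ∧ (b:ℕ) = 0 then u0 ε N (min ε η) ↑i ↑j else 0 := rfl
    rw [hx]
    by_cases hab : (a:ℕ) = 0 ∧ (b:ℕ) = 0
    · simp only [if_pos hab]
      exact eigU hη hε hNval i.isLt j.isLt
    · simp only [if_neg hab, ite_self]
      ring
  · show 2 * vbar (x0 η m ε n N) ↑i ↑a ↑j ↑b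
      + (ubar (x0 η m ε n N) ((i:ℕ)+1) ↑a ↑j ↑b + ubar (x0 η m ε n N) ↑i ↑a ((j:ℕ)+1) ↑b)
      = _ * x0 η m ε n N (Sum.inr (i, (a, (j, b))))
    rw [vbar_x0 hη hm hε hn hNval, ubar_x0 hη hm hε hn hNval, ubar_x0 hη hm hε hn hNval]
    have hx : x0 η m ε n N (Sum.inr (i, (a, (j, b))))
        = if (a:ℕ) = 0 ∧ (b:ℕ) = 0 then v0 ε N (min ε η) ↑i ↑j else 0 := rfl
    rw [hx]
    by_cases hab : (a:ℕ) = 0 ∧ (b:ℕ) = 0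
    · simp only [if_pos hab]
      exact eigV hη hε hNval i.isLt j.isLt
    · simp only [if_neg hab]
      ring

include hη hm hε hn hNval in
lemma x0_norm_pos : 0 < ∑ r, x0 η m ε n N r ^ 2 := by
  have hk : min ε η - 1 < ε := by omega
  have hval : x0 η m ε n N (Sum.inr (⟨0, hη⟩, (⟨0, hm⟩, (⟨min ε η - 1, hk⟩, ⟨0, hn⟩))))
      = v0 ε N (min ε η) 0 (min ε η - 1) := by
    show (if (0:ℕ) = 0 ∧ (0:ℕ) = 0 then v0 ε N (min ε η) 0 (min ε η - 1) else 0) = _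
    rw [if_pos ⟨rfl, rfl⟩]
  have hne := v0_ne hη hε hNval
  have hpos : 0 < x0 η m ε n N (Sum.inr (⟨0, hη⟩, (⟨0, hm⟩, (⟨min ε η - 1, hk⟩, ⟨0, hn⟩)))) ^ 2 := by
    rw [hval]
    positivity
  exact lt_of_lt_of_le hpos
    (Finset.single_le_sum (f := fun r => x0 η m ε n N r ^ 2)
      (fun r _ => sq_nonneg _) (Finset.mem_univ _))

-- sum conversion machinery
lemma reorder4 {K1 K2 K3 K4 : Type*} [Fintype K1] [Fintype K2] [Fintype K3] [Fintype K4]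
    (G : K1 → K2 → K3 → K4 → ℝ) :
    (∑ x : K1, ∑ y : K2, ∑ z : K3, ∑ w : K4, G x y z w)
      = ∑ y : K2, ∑ w : K4, ∑ x : K1, ∑ z : K3, G x y z w := by
  rw [Finset.sum_comm]
  refine Finset.sum_congr rfl fun y _ => ?_
  rw [show (∑ x : K1, ∑ z : K3, ∑ w : K4, G x y z w)
      = ∑ x : K1, ∑ w : K4, ∑ z : K3, G x y z w from
    Finset.sum_congr rfl fun x _ => Finset.sum_comm]
  rw [Finset.sum_comm]

lemma finrange4 {K1 K2 K3 K4 : ℕ} (G : ℕ → ℕ → ℕ → ℕ → ℝ) :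
    (∑ x : Fin K1, ∑ y : Fin K2, ∑ z : Fin K3, ∑ w : Fin K4, G ↑x ↑y ↑z ↑w)
      = ∑ x ∈ Finset.range K1, ∑ y ∈ Finset.range K2,
          ∑ z ∈ Finset.range K3, ∑ w ∈ Finset.range K4, G x y z w := by
  rw [Fin.sum_univ_eq_sum_range (fun x => ∑ y : Fin K2, ∑ z : Fin K3, ∑ w : Fin K4, G x ↑y ↑z ↑w)]
  refine Finset.sum_congr rfl fun x _ => ?_
  rw [Fin.sum_univ_eq_sum_range (fun y => ∑ z : Fin K3, ∑ w : Fin K4, G x y ↑z ↑w)]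
  refine Finset.sum_congr rfl fun y _ => ?_
  rw [Fin.sum_univ_eq_sum_range (fun z => ∑ w : Fin K4, G x y z ↑w)]
  refine Finset.sum_congr rfl fun z _ => ?_
  exact Fin.sum_univ_eq_sum_range (fun w => G x y z w) K4

lemma conv4 (F : ℕ → ℕ → ℕ → ℕ → ℝ) :
    (∑ i : Fin η, ∑ a : Fin m, ∑ j : Fin ε, ∑ b : Fin n, F ↑i ↑a ↑j ↑b)
      = ∑ a ∈ Finset.range m, ∑ b ∈ Finset.range n,
          ∑ i ∈ Finset.range η, ∑ j ∈ Finset.range ε, F i a j b := by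
  rw [reorder4]
  exact finrange4 (fun a b i j => F i a j b)

noncomputable def Fterm (x : RT η m ε n → ℝ) (i a j b : ℕ) : ℝ :=
  ubar x i a j b * (2 * ubar x i a j b
    + ((if i = 0 then 0 else vbar x (i-1) a j b) + (if j = 0 then 0 else vbar x i a (j-1) b)))

noncomputable def Gterm (x : RT η m ε n → ℝ) (i a j b : ℕ) : ℝ :=
  vbar x i a j b * (2 * vbar x i a j b + (ubar x (i+1) a j b + ubar x i a (j+1) b))

lemma Q_eq (x : RT η m ε n → ℝ) :
    x ⬝ᵥ ((Smat η m ε n * (Smat η m ε n)ᴴ) *ᵥ x)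
      = ∑ a ∈ Finset.range m, ∑ b ∈ Finset.range n, ∑ i ∈ Finset.range η,
          ∑ j ∈ Finset.range ε, (Fterm x i a j b + Gterm x i a j b) := by
  calc x ⬝ᵥ ((Smat η m ε n * (Smat η m ε n)ᴴ) *ᵥ x)
      = ∑ r, x r * yform x r := by
        rw [dotProduct]
        exact Finset.sum_congr rfl fun r _ => by rw [Amul_apply]
    _ = (∑ i : Fin η, ∑ a : Fin m, ∑ j : Fin ε, ∑ b : Fin n, Fterm x ↑i ↑a ↑j ↑b)
        + (∑ i : Fin η, ∑ a : Fin m, ∑ j : Fin ε, ∑ b : Fin n, Gterm x ↑i ↑a ↑j ↑b) := by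
        rw [Fintype.sum_sum_type]
        congr 1
        · rw [Fintype.sum_prod_type]
          refine Finset.sum_congr rfl fun i _ => ?_
          rw [Fintype.sum_prod_type]
          refine Finset.sum_congr rfl fun a _ => ?_
          rw [Fintype.sum_prod_type]
          refine Finset.sum_congr rfl fun j _ => Finset.sum_congr rfl fun b _ => ?_
          rw [Fterm, ← ubar_apply x i a j b]
          rfl
        · rw [Fintype.sum_prod_type]
          refine Finset.sum_congr rfl fun i _ => ?_
          rw [Fintype.sum_prod_type]
          refine Finset.sum_congr rfl fun a _ => ?_
          rw [Fintype.sum_prod_type]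
          refine Finset.sum_congr rfl fun j _ => Finset.sum_congr rfl fun b _ => ?_
          rw [Gterm, ← vbar_apply x i a j b]
          rfl
    _ = (∑ a ∈ Finset.range m, ∑ b ∈ Finset.range n, ∑ i ∈ Finset.range η,
          ∑ j ∈ Finset.range ε, Fterm x i a j b)
        + (∑ a ∈ Finset.range m, ∑ b ∈ Finset.range n, ∑ i ∈ Finset.range η,
          ∑ j ∈ Finset.range ε, Gterm x i a j b) := by
        rw [conv4 (Fterm x), conv4 (Gterm x)]
    _ = _ := by
        simp only [← Finset.sum_add_distrib]

lemma norm_eq (x : RT η m ε n → ℝ) :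
    ∑ r, x r ^ 2
      = ∑ a ∈ Finset.range m, ∑ b ∈ Finset.range n, ∑ i ∈ Finset.range η,
          ∑ j ∈ Finset.range ε, ((ubar x i a j b)^2 + (vbar x i a j b)^2) := by
  calc ∑ r, x r ^ 2
      = (∑ i : Fin η, ∑ a : Fin m, ∑ j : Fin ε, ∑ b : Fin n, (ubar x ↑i ↑a ↑j ↑b)^2)
        + (∑ i : Fin η, ∑ a : Fin m, ∑ j : Fin ε, ∑ b : Fin n, (vbar x ↑i ↑a ↑j ↑b)^2) := by
        rw [Fintype.sum_sum_type]
        congr 1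
        · rw [Fintype.sum_prod_type]
          refine Finset.sum_congr rfl fun i _ => ?_
          rw [Fintype.sum_prod_type]
          refine Finset.sum_congr rfl fun a _ => ?_
          rw [Fintype.sum_prod_type]
          refine Finset.sum_congr rfl fun j _ => Finset.sum_congr rfl fun b _ => ?_
          rw [ubar_apply]
        · rw [Fintype.sum_prod_type]
          refine Finset.sum_congr rfl fun i _ => ?_
          rw [Fintype.sum_prod_type]
          refine Finset.sum_congr rfl fun a _ => ?_
          rw [Fintype.sum_prod_type]
          refine Finset.sum_congr rfl fun j _ => Finset.sum_congr rfl fun b _ => ?_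
          rw [vbar_apply]
    _ = _ := by
        rw [conv4 (fun i a j b => (ubar x i a j b)^2), conv4 (fun i a j b => (vbar x i a j b)^2)]
        simp only [← Finset.sum_add_distrib]

include hη hm hε hn hNval in
lemma Q_lower (x : RT η m ε n → ℝ) :
    (2 - 2*Real.cos (Real.pi/N)) * (∑ r, x r ^ 2)
      ≤ x ⬝ᵥ ((Smat η m ε n * (Smat η m ε n)ᴴ) *ᵥ x) := by
  have hN2 : 2 ≤ N := by rcases hNval with ⟨he, hn'⟩ | ⟨he, hn'⟩ <;> omega
  have hL : ∀ k, smax η k + 2 ≤ N + smin ε k := by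
    intro k
    unfold smax smin
    rcases hNval with ⟨he, hn'⟩ | ⟨he, hn'⟩ <;> split_ifs <;> omega
  rw [Q_eq, norm_eq, Finset.mul_sum]
  refine Finset.sum_le_sum fun a _ => ?_
  rw [Finset.mul_sum]
  refine Finset.sum_le_sum fun b _ => ?_
  have := quadLower hη hε hN2 hL (fun i j => ubar x i a j b) (fun i j => vbar x i a j b)
    (fun i j hij => by show ubar x i a j b = 0; unfold ubar; rw [dif_neg (by omega)])
  exact this

include hη hm hε hn hNval in
lemma iInf_eq :
    (⨅ r, (Matrix.isHermitian_mul_conjTranspose_self (Smat η m ε n)).eigenvalues r)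
      = 2 - 2*Real.cos (Real.pi/N) := by
  haveI : Nonempty (RT η m ε n) :=
    ⟨Sum.inl (⟨0, hη⟩, (⟨0, hm⟩, (⟨0, hε⟩, ⟨0, hn⟩)))⟩
  apply le_antisymm
  · exact eig_inf_le _ _ (x0 η m ε n N) _ (x0_norm_pos hη hm hε hn hNval)
      (Ax0 hη hm hε hn hNval)
  · exact le_ciInf fun r => eig_lower_bound _ _ _
      (fun x => Q_lower hη hm hε hn hNval x) r

end Main
end St2

namespace St2

lemma final_bound (N : ℕ) (hN2 : 2 ≤ N) :
    2 * Real.sqrt 2 / (N:ℝ) ≤ 2 * Real.sin (Real.pi/(2*(N:ℝ))) := by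
  have hπ := Real.pi_pos
  have hNr : (2:ℝ) ≤ (N:ℝ) := by exact_mod_cast hN2
  have h1 : (0:ℝ) ≤ Real.pi/(2*(N:ℝ)) := by positivity
  have h2 : Real.pi/(2*(N:ℝ)) ≤ Real.pi/4 := by
    rw [div_le_div_iff₀ (by positivity) (by positivity)]
    nlinarith
  have hch := chord h1 h2
  have he : 2*Real.sqrt 2/Real.pi * (Real.pi/(2*(N:ℝ))) = Real.sqrt 2 / (N:ℝ) := by
    field_simp
  rw [he] at hch
  have : 2*Real.sqrt 2/(N:ℝ) = 2 * (Real.sqrt 2/(N:ℝ)) := by ring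
  rw [this]
  linarith

end St2

/-- Lemma 3.3. The smallest singular value `ω₃` of the block matrix
`[[E_η⊗I_{mεn}, I_{ηm}⊗E_ε⊗I_n], [F_η⊗I_{mεn}, I_{ηm}⊗F_ε⊗I_n]]` satisfies
`ω₃ ≥ 2√2/(ε+η)`, and in fact equals the stated sine expressions. -/
theorem statement2 (η m ε n : ℕ) (hη : 0 < η) (hm : 0 < m) (hε : 0 < ε) (hn : 0 < n) :
    let ω₃ := sigmaMin (Matrix.fromBlocks
      (Ek ℝ η ⊗ₖ (1 : Matrix (Fin m × (Fin ε × Fin n)) (Fin m × (Fin ε × Fin n)) ℝ))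
      ((1 : Matrix (Fin η) (Fin η) ℝ) ⊗ₖ ((1 : Matrix (Fin m) (Fin m) ℝ) ⊗ₖ
        (Ek ℝ ε ⊗ₖ (1 : Matrix (Fin n) (Fin n) ℝ))))
      (Fk ℝ η ⊗ₖ (1 : Matrix (Fin m × (Fin ε × Fin n)) (Fin m × (Fin ε × Fin n)) ℝ))
      ((1 : Matrix (Fin η) (Fin η) ℝ) ⊗ₖ ((1 : Matrix (Fin m) (Fin m) ℝ) ⊗ₖ
        (Fk ℝ ε ⊗ₖ (1 : Matrix (Fin n) (Fin n) ℝ)))));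
    2 * Real.sqrt 2 / ((ε : ℝ) + (η : ℝ)) ≤ ω₃ ∧
    (ε ≠ η → ω₃ = 2 * Real.sin (Real.pi / (4 * (min ε η : ℝ) + 2))) ∧
    (ε = η → ω₃ = 2 * Real.sin (Real.pi / (4 * (η : ℝ)))) := by
  intro ω₃
  have hωd : ω₃ = Real.sqrt (⨅ r,
      (Matrix.isHermitian_mul_conjTranspose_self (St2.Smat η m ε n)).eigenvalues r) := rfl
  have hεη : (0:ℝ) < (ε:ℝ) + (η:ℝ) := by positivity
  by_cases hcase : ε = η
  · have hNval : (ε = η ∧ 2*η = 2*η) ∨ (ε ≠ η ∧ 2*η = 2*(min ε η)+1) := Or.inl ⟨hcase, rfl⟩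
    have hN2 : 2 ≤ 2*η := by omega
    have hω : ω₃ = 2 * Real.sin (Real.pi/(2*((2*η : ℕ):ℝ))) := by
      rw [hωd, St2.iInf_eq hη hm hε hn hNval, St2.sqrt_c (2*η) hN2]
    refine ⟨?_, fun hne => absurd hcase hne, fun _ => ?_⟩
    · rw [hω]
      have hsum : (ε:ℝ) + (η:ℝ) = ((2*η : ℕ):ℝ) := by
        subst hcase; push_cast; ring
      rw [hsum]
      exact St2.final_bound (2*η) hN2
    · rw [hω]
      congr 1
      push_cast
      ring
  · have hNval : (ε = η ∧ 2*(min ε η)+1 = 2*η) ∨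
        (ε ≠ η ∧ 2*(min ε η)+1 = 2*(min ε η)+1) := Or.inr ⟨hcase, rfl⟩
    have hN2 : 2 ≤ 2*(min ε η)+1 := by omega
    have hω : ω₃ = 2 * Real.sin (Real.pi/(2*((2*(min ε η)+1 : ℕ):ℝ))) := by
      rw [hωd, St2.iInf_eq hη hm hε hn hNval, St2.sqrt_c _ hN2]
    refine ⟨?_, fun _ => ?_, fun h => absurd h hcase⟩
    · rw [hω]
      have hle : ((2*(min ε η)+1 : ℕ):ℝ) ≤ (ε:ℝ) + (η:ℝ) := by
        have : (2*(min ε η)+1 : ℕ) ≤ ε + η := by omega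
        exact_mod_cast this
      have h1 : 2 * Real.sqrt 2 / ((ε:ℝ) + (η:ℝ))
          ≤ 2 * Real.sqrt 2 / ((2*(min ε η)+1 : ℕ):ℝ) := by
        apply div_le_div_of_nonneg_left (by positivity) (by positivity) hle
      exact h1.trans (St2.final_bound _ hN2)
    · rw [hω]
      congr 1
      push_cast
      ring
end

section
/- Let k and r be positive integers. Let ω₄ be the smallest singular value (the 2k(k+1)r²-th largest singular value) of the 2k(k+1)r² × (2k²+2k+1)r² block matrix [[E_kᵀ⊗I_{kr²}, I_{(k+1)r}⊗E_k⊗I_r],[F_kᵀ⊗I_{kr²}, I_{(k+1)r}⊗F_k⊗I_r]]. Then ω₄ = 2·sin(π/(8k−2)); in particular, ω₄ ≥ 3/(4k−1). -/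
open Matrix
open scoped Kronecker

namespace St3
open Matrix Real


noncomputable def th (k : ℕ) : ℝ := π / (4*(k:ℝ) - 1)
noncomputable def mu (k : ℕ) : ℝ := 2 - 2*Real.cos (th k)

lemma kcast {k : ℕ} (hk : 0 < k) : (1:ℝ) ≤ (k:ℝ) := by exact_mod_cast hk

lemma th_pos {k : ℕ} (hk : 0 < k) : 0 < th k := by
  have := kcast hk
  apply div_pos Real.pi_pos; nlinarith

lemma two_cos {k : ℕ} (x : ℝ) :
    Real.cos ((x-1)*th k) + Real.cos ((x+1)*th k) = (2 - mu k) * Real.cos (x * th k) := by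
  have h1 : (x-1)*th k = x*th k - th k := by ring
  have h2 : (x+1)*th k = x*th k + th k := by ring
  rw [h1, h2, Real.cos_add, Real.cos_sub, mu]; ring

lemma two_sin {k : ℕ} (x : ℝ) :
    Real.sin ((x-1)*th k) + Real.sin ((x+1)*th k) = (2 - mu k) * Real.sin (x * th k) := by
  have h1 : (x-1)*th k = x*th k - th k := by ring
  have h2 : (x+1)*th k = x*th k + th k := by ring
  rw [h1, h2, Real.sin_add, Real.sin_sub, mu]; ring

lemma half_angle {k : ℕ} (hk : 0 < k) : (2*(k:ℝ) - 1/2) * th k = π/2 := by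
  have h := kcast hk
  have h4 : (4*(k:ℝ) - 1) ≠ 0 := by nlinarith
  rw [th, ← mul_div_assoc, div_eq_iff h4]; ring

lemma cos_nonneg_aux {k : ℕ} (hk : 0 < k) {t : ℝ} (ht : |t| ≤ 2*(k:ℝ) - 1/2) :
    0 ≤ Real.cos (t * th k) := by
  have hθ := th_pos hk
  have h2 : |t * th k| ≤ π/2 := by
    rw [← half_angle hk, abs_mul, abs_of_pos hθ]
    exact mul_le_mul_of_nonneg_right ht hθ.le
  rw [abs_le] at h2
  exact Real.cos_nonneg_of_mem_Icc ⟨by linarith [h2.1], h2.2⟩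

lemma cos_pos_aux {k : ℕ} (hk : 0 < k) {t : ℝ} (ht : |t| ≤ 2*(k:ℝ) - 3/2) :
    0 < Real.cos (t * th k) := by
  have hθ := th_pos hk
  have h2 : |t * th k| < π/2 := by
    rw [← half_angle hk, abs_mul, abs_of_pos hθ]
    have : |t| < 2*(k:ℝ) - 1/2 := by linarith
    exact mul_lt_mul_of_pos_right this hθ
  rw [abs_lt] at h2
  exact Real.cos_pos_of_mem_Ioo ⟨h2.1, h2.2⟩

noncomputable def phiU (k a b : ℕ) : ℝ :=
  if b < a then Real.cos ((2*(k:ℝ) + 1/2 - 2*(a:ℝ)) * th k)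
  else if a = b then Real.cos ((2*(a:ℝ) + 1/2 - (k:ℝ)) * th k)
  else Real.cos ((2*(a:ℝ) + 3/2) * th k)

noncomputable def phiV (k a b : ℕ) : ℝ :=
  if b + 1 < a then Real.cos ((2*(k:ℝ) + 3/2 - 2*(a:ℝ)) * th k)
  else if a = b + 1 then Real.cos ((2*(a:ℝ) - 1/2 - (k:ℝ)) * th k)
  else Real.cos ((2*(a:ℝ) + 1/2) * th k)

lemma phiU_pos {k a b : ℕ} (hk : 0 < k) (ha : a ≤ k) (hb : b < k) : 0 < phiU k a b := by
  have hk1 := kcast hk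
  have haR : (a:ℝ) ≤ k := by exact_mod_cast ha
  have hbR : (b:ℝ) + 1 ≤ k := by exact_mod_cast hb
  rw [phiU]
  split_ifs with h1 h2
  · have h1R : (b:ℝ) + 1 ≤ a := by exact_mod_cast h1
    apply cos_pos_aux hk; rw [abs_le]
    constructor <;> nlinarith [Nat.cast_nonneg (α := ℝ) b]
  · have : (a:ℝ) = b := by exact_mod_cast h2
    apply cos_pos_aux hk; rw [abs_le]
    constructor <;> nlinarith [Nat.cast_nonneg (α := ℝ) a]
  · have h3 : a + 1 ≤ b := by omega
    have h3R : (a:ℝ) + 1 ≤ b := by exact_mod_cast h3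
    apply cos_pos_aux hk; rw [abs_le]
    constructor <;> nlinarith [Nat.cast_nonneg (α := ℝ) a]

lemma phiV_pos {k a b : ℕ} (hk : 0 < k) (ha : a ≤ k) (hb : b < k) : 0 < phiV k a b := by
  have hk1 := kcast hk
  have haR : (a:ℝ) ≤ k := by exact_mod_cast ha
  have hbR : (b:ℝ) + 1 ≤ k := by exact_mod_cast hb
  rw [phiV]
  split_ifs with h1 h2
  · have h1R : (b:ℝ) + 2 ≤ a := by exact_mod_cast h1
    apply cos_pos_aux hk; rw [abs_le]
    constructor <;> nlinarith [Nat.cast_nonneg (α := ℝ) b]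
  · have : (a:ℝ) = (b:ℝ) + 1 := by exact_mod_cast h2
    apply cos_pos_aux hk; rw [abs_le]
    constructor <;> nlinarith [Nat.cast_nonneg (α := ℝ) a, Nat.cast_nonneg (α := ℝ) b]
  · have h3 : a ≤ b := by omega
    have h3R : (a:ℝ) ≤ b := by exact_mod_cast h3
    apply cos_pos_aux hk; rw [abs_le]
    constructor <;> nlinarith [Nat.cast_nonneg (α := ℝ) a]



lemma Cu {k a b : ℕ} (hk : 0 < k) (ha : a ≤ k) (hb : b < k) :
    mu k * phiU k a b + (if a < k then phiV k (a+1) b else 0)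
      + (if b = 0 then 0 else phiV k a (b-1))
    ≤ ((if a < k then (1:ℝ) else 0) + 1) * phiU k a b := by
  have hk1 := kcast hk
  have haR : (a:ℝ) ≤ k := by exact_mod_cast ha
  have hbR : (b:ℝ) + 1 ≤ k := by exact_mod_cast hb
  rcases Nat.lt_trichotomy b a with h | h | h
  · -- region A : b < a
    have hRba : (b:ℝ) + 1 ≤ a := by exact_mod_cast h
    set X : ℝ := 2*(k:ℝ) + 1/2 - 2*(a:ℝ) with hX
    have e0 : phiU k a b = Real.cos (X * th k) := by rw [phiU, if_pos h]
    have e1 : phiV k (a+1) b = Real.cos ((X-1) * th k) := by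
      rw [phiV, if_pos (by omega)]; congr 1; push_cast; ring
    have key := two_cos (k := k) X
    rw [e0, e1]
    by_cases hak : a < k
    · have e2 : (if b = 0 then (0:ℝ) else phiV k a (b-1))
          = (if b = 0 then 0 else Real.cos ((X+1) * th k)) := by
        split_ifs with h0
        · rfl
        · rw [phiV, if_pos (by omega)]; congr 1; push_cast; ring
      rw [e2, if_pos hak, if_pos hak]
      have hakR : (a:ℝ) + 1 ≤ k := by exact_mod_cast hak
      have hnn : 0 ≤ Real.cos ((X+1) * th k) := by
        apply cos_nonneg_aux hk; rw [abs_le]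
        constructor <;> nlinarith [Nat.cast_nonneg (α := ℝ) b]
      split_ifs with h0 <;> linarith
    · have hae : a = k := by omega
      have haeR : (a:ℝ) = k := by exact_mod_cast hae
      have hflip : Real.cos ((X-1) * th k) = Real.cos (X * th k) := by
        have hxe : (X-1) * th k = -(X * th k) := by
          rw [hX, haeR]; ring
        rw [hxe, Real.cos_neg]
      have e2 : (if b = 0 then (0:ℝ) else phiV k a (b-1))
          = (if b = 0 then 0 else Real.cos ((X+1) * th k)) := by
        split_ifs with h0
        · rfl
        · rw [phiV, if_pos (by omega)]; congr 1; push_cast; ring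
      have hnn : 0 ≤ Real.cos ((X+1) * th k) := by
        apply cos_nonneg_aux hk; rw [abs_le]
        constructor <;> nlinarith [Nat.cast_nonneg (α := ℝ) b]
      rw [e2, if_neg hak, if_neg hak]
      split_ifs with h0 <;> linarith
  · -- region B : b = a
    have hak : a < k := by omega
    set X : ℝ := 2*(a:ℝ) + 1/2 - (k:ℝ) with hX
    have e0 : phiU k a b = Real.cos (X * th k) := by
      rw [phiU, if_neg (by omega), if_pos (by omega)]
    have e1 : phiV k (a+1) b = Real.cos ((X+1) * th k) := by
      rw [phiV, if_neg (by omega), if_pos (by omega)]; congr 1; push_cast; ring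
    have key := two_cos (k := k) X
    rw [e0, e1, if_pos hak, if_pos hak]
    by_cases h0 : b = 0
    · rw [if_pos h0]
      have ha0 : a = 0 := by omega
      have hnn : 0 ≤ Real.cos ((X-1) * th k) := by
        apply cos_nonneg_aux hk; rw [abs_le]
        simp only [hX, ha0]
        constructor <;> push_cast <;> nlinarith
      linarith
    · rw [if_neg h0]
      have e2 : phiV k a (b-1) = Real.cos ((X-1) * th k) := by
        rw [phiV, if_neg (by omega), if_pos (by omega)]; congr 1; push_cast; ring
      rw [e2]; linarith
  · -- region C : a < b
    have hak : a < k := by omega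
    have hRab : (a:ℝ) + 1 ≤ b := by exact_mod_cast h
    set X : ℝ := 2*(a:ℝ) + 3/2 with hX
    have e0 : phiU k a b = Real.cos (X * th k) := by
      rw [phiU, if_neg (by omega), if_neg (by omega)]
    have e1 : phiV k (a+1) b = Real.cos ((X+1) * th k) := by
      rw [phiV, if_neg (by omega), if_neg (by omega)]; congr 1; push_cast; ring
    have e2 : phiV k a (b-1) = Real.cos ((X-1) * th k) := by
      rw [phiV, if_neg (by omega), if_neg (by omega)]; congr 1; push_cast; ring
    have key := two_cos (k := k) X
    rw [e0, e1, if_pos hak, if_pos hak, if_neg (by omega), e2]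
    linarith

lemma Cv {k a b : ℕ} (hk : 0 < k) (ha : a ≤ k) (hb : b < k) :
    mu k * phiV k a b + (if 0 < a then phiU k (a-1) b else 0)
      + (if b+1 = k then 0 else phiU k a (b+1))
    ≤ ((if 0 < a then (1:ℝ) else 0) + 1) * phiV k a b := by
  have hk1 := kcast hk
  have haR : (a:ℝ) ≤ k := by exact_mod_cast ha
  have hbR : (b:ℝ) + 1 ≤ k := by exact_mod_cast hb
  rcases Nat.lt_trichotomy (b+1) a with h | h | h
  · -- region A' : b + 1 < a
    have hRba : (b:ℝ) + 2 ≤ a := by exact_mod_cast h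
    set Y : ℝ := 2*(k:ℝ) + 3/2 - 2*(a:ℝ) with hY
    have e0 : phiV k a b = Real.cos (Y * th k) := by rw [phiV, if_pos h]
    have e1 : phiU k (a-1) b = Real.cos ((Y+1) * th k) := by
      rw [phiU, if_pos (by omega)]; congr 1
      push_cast [Nat.cast_sub (by omega : 1 ≤ a)]; ring
    have e2 : phiU k a (b+1) = Real.cos ((Y-1) * th k) := by
      rw [phiU, if_pos h]; congr 1; push_cast; ring
    have key := two_cos (k := k) Y
    have h1 : 0 < a := by omega
    have h2 : ¬ (b + 1 = k) := by omega
    rw [e0, e1, e2, if_pos h1, if_pos h1, if_neg h2]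
    linarith
  · -- region B' : a = b+1
    have h0a : 0 < a := by omega
    set Y : ℝ := 2*(a:ℝ) - 1/2 - (k:ℝ) with hY
    have e0 : phiV k a b = Real.cos (Y * th k) := by
      rw [phiV, if_neg (by omega), if_pos h.symm]
    have e1 : phiU k (a-1) b = Real.cos ((Y-1) * th k) := by
      rw [phiU, if_neg (by omega), if_pos (by omega)]; congr 1
      push_cast [Nat.cast_sub (by omega : 1 ≤ a)]; ring
    have key := two_cos (k := k) Y
    rw [e0, e1, if_pos h0a, if_pos h0a]
    by_cases hbk : b + 1 = k
    · rw [if_pos hbk]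
      have hnn : 0 ≤ Real.cos ((Y+1) * th k) := by
        apply cos_nonneg_aux hk; rw [abs_le]
        have hak : (a:ℝ) = k := by exact_mod_cast (by omega : a = k)
        constructor <;> nlinarith
      linarith
    · rw [if_neg hbk]
      have e2 : phiU k a (b+1) = Real.cos ((Y+1) * th k) := by
        rw [phiU, if_neg (by omega), if_pos h.symm]; congr 1; push_cast; ring
      rw [e2]; linarith
  · -- region C' : a ≤ b
    have hab : a ≤ b := by omega
    have hRab : (a:ℝ) ≤ b := by exact_mod_cast hab
    set Y : ℝ := 2*(a:ℝ) + 1/2 with hY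
    have e0 : phiV k a b = Real.cos (Y * th k) := by
      rw [phiV, if_neg (by omega), if_neg (by omega)]
    have key := two_cos (k := k) Y
    have hnn : 0 ≤ Real.cos ((Y+1) * th k) := by
      apply cos_nonneg_aux hk; rw [abs_le]
      constructor <;> nlinarith [Nat.cast_nonneg (α := ℝ) a]
    rw [e0]
    by_cases h0a : 0 < a
    · have e1 : phiU k (a-1) b = Real.cos ((Y-1) * th k) := by
        rw [phiU, if_neg (by omega), if_neg (by omega)]; congr 1
        push_cast [Nat.cast_sub (by omega : 1 ≤ a)]; ring
      rw [e1, if_pos h0a, if_pos h0a]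
      by_cases hbk : b + 1 = k
      · rw [if_pos hbk]; linarith
      · rw [if_neg hbk]
        have e2 : phiU k a (b+1) = Real.cos ((Y+1) * th k) := by
          rw [phiU, if_neg (by omega), if_neg (by omega)]; congr 1; push_cast; ring
        rw [e2]; linarith
    · have ha0 : a = 0 := by omega
      subst ha0
      have hflip : Real.cos ((Y-1) * th k) = Real.cos (Y * th k) := by
        have hxe : (Y-1) * th k = -(Y * th k) := by
          rw [hY]; push_cast; ring
        rw [hxe, Real.cos_neg]
      rw [if_neg h0a, if_neg h0a]
      by_cases hbk : b + 1 = k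
      · rw [if_pos hbk]; linarith
      · rw [if_neg hbk]
        have e2 : phiU k 0 (b+1) = Real.cos ((Y+1) * th k) := by
          rw [phiU, if_neg (by omega), if_neg (by omega)]; congr 1; push_cast; ring
        rw [e2]; linarith


variable {k r : ℕ}

abbrev B1 (k r : ℕ) := Fin r × (Fin k × Fin r)
abbrev B2 (k r : ℕ) := Fin r × (Fin (k+1) × Fin r)
abbrev RT (k r : ℕ) := (Fin (k+1) × B1 k r) ⊕ (Fin (k+1) × B1 k r)
abbrev CT (k r : ℕ) := (Fin k × B1 k r) ⊕ (Fin (k+1) × B2 k r)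

noncomputable def Mm (k r : ℕ) : Matrix (RT k r) (CT k r) ℝ :=
  Matrix.fromBlocks
      ((Ek ℝ k)ᵀ ⊗ₖ (1 : Matrix (B1 k r) (B1 k r) ℝ))
      ((1 : Matrix (Fin (k+1)) (Fin (k+1)) ℝ) ⊗ₖ ((1 : Matrix (Fin r) (Fin r) ℝ) ⊗ₖ
        (Ek ℝ k ⊗ₖ (1 : Matrix (Fin r) (Fin r) ℝ))))
      ((Fk ℝ k)ᵀ ⊗ₖ (1 : Matrix (B1 k r) (B1 k r) ℝ))
      ((1 : Matrix (Fin (k+1)) (Fin (k+1)) ℝ) ⊗ₖ ((1 : Matrix (Fin r) (Fin r) ℝ) ⊗ₖ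
        (Fk ℝ k ⊗ₖ (1 : Matrix (Fin r) (Fin r) ℝ))))

lemma Ek_apply (b : Fin k) (d : Fin (k+1)) :
    Ek ℝ k b d = if d = Fin.castSucc b then 1 else 0 := by
  simp [Ek, Fin.ext_iff]

lemma Fk_apply (b : Fin k) (d : Fin (k+1)) :
    Fk ℝ k b d = if d = Fin.succ b then 1 else 0 := by
  simp [Fk, Fin.ext_iff]

lemma sum_castSucc_eq {n : ℕ} (d : Fin (n+1)) (f : Fin n → ℝ) :
    (∑ b : Fin n, if d = Fin.castSucc b then f b else 0)
      = if h : (d:ℕ) < n then f ⟨d,h⟩ else 0 := by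
  split_ifs with h
  · rw [Finset.sum_eq_single ⟨(d:ℕ),h⟩]
    · rw [if_pos (by simp [Fin.ext_iff])]
    · intro b _ hb
      rw [if_neg]
      intro hc
      exact hb (by simp [Fin.ext_iff, hc])
    · simp
  · apply Finset.sum_eq_zero
    intro b _
    rw [if_neg]
    intro hc
    exact h (by simp [hc, b.isLt])

lemma sum_succ_eq {n : ℕ} (d : Fin (n+1)) (f : Fin n → ℝ) :
    (∑ b : Fin n, if d = Fin.succ b then f b else 0)
      = if h : 0 < (d:ℕ) then f ⟨(d:ℕ)-1, by omega⟩ else 0 := by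
  split_ifs with h
  · rw [Finset.sum_eq_single ⟨(d:ℕ)-1, by omega⟩]
    · rw [if_pos (by simp [Fin.ext_iff]; omega)]
    · intro b _ hb
      rw [if_neg]
      intro hc
      apply hb
      simp [Fin.ext_iff] at hc ⊢
      omega
    · simp
  · apply Finset.sum_eq_zero
    intro b _
    rw [if_neg]
    intro hc
    apply h
    simp [Fin.ext_iff] at hc
    omega


lemma sum_ite_const {α : Type*} [Fintype α] (c : Prop) [Decidable c] (f : α → ℝ) :
    (∑ i : α, if c then f i else 0) = if c then ∑ i, f i else 0 := by
  split_ifs <;> simp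

lemma sum_dite_const {α : Type*} [Fintype α] (c : Prop) [Decidable c] (f : c → α → ℝ) :
    (∑ i : α, if h : c then f h i else 0) = if h : c then ∑ i, f h i else 0 := by
  split_ifs <;> simp

lemma mulVecT_inl (x : RT k r → ℝ) (c : Fin k) (m : B1 k r) :
    ((Mm k r)ᵀ *ᵥ x) (Sum.inl (c, m)) =
      x (Sum.inl (Fin.castSucc c, m)) + x (Sum.inr (Fin.succ c, m)) := by
  obtain ⟨ρ, b, σ⟩ := m
  rw [Matrix.mulVec]
  simp only [dotProduct, Fintype.sum_sum_type, Matrix.transpose_apply, Mm,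
    Matrix.fromBlocks_apply₁₁, Matrix.fromBlocks_apply₂₁, Matrix.kroneckerMap_apply,
    Matrix.transpose_apply, Fintype.sum_prod_type, Ek_apply, Fk_apply, Matrix.one_apply]
  simp [ite_mul, mul_ite, Prod.mk.injEq, ite_and, Finset.sum_ite_eq, Finset.sum_ite_eq']

lemma mulVecT_inr (x : RT k r → ℝ) (a : Fin (k+1)) (ρ σ : Fin r) (d : Fin (k+1)) :
    ((Mm k r)ᵀ *ᵥ x) (Sum.inr (a, (ρ, (d, σ)))) =
      (if h : (d:ℕ) < k then x (Sum.inl (a, (ρ, (⟨d,h⟩, σ)))) else 0)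
      + (if h : 0 < (d:ℕ) then x (Sum.inr (a, (ρ, (⟨(d:ℕ)-1, by omega⟩, σ)))) else 0) := by
  rw [Matrix.mulVec]
  simp only [dotProduct, Fintype.sum_sum_type, Matrix.transpose_apply, Mm,
    Matrix.fromBlocks_apply₁₂, Matrix.fromBlocks_apply₂₂, Matrix.kroneckerMap_apply,
    Fintype.sum_prod_type, Ek_apply, Fk_apply, Matrix.one_apply]
  simp only [ite_mul, mul_ite, mul_one, mul_zero, zero_mul, one_mul, Prod.mk.injEq, ite_and,
    sum_castSucc_eq, sum_succ_eq, sum_ite_const, sum_dite_const, Finset.sum_ite_eq,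
    Finset.sum_ite_eq', Finset.mem_univ, if_true, Finset.sum_const_zero]

lemma mulVec_inl (z : CT k r → ℝ) (a : Fin (k+1)) (ρ σ : Fin r) (b : Fin k) :
    (Mm k r *ᵥ z) (Sum.inl (a, (ρ, (b, σ)))) =
      (if h : (a:ℕ) < k then z (Sum.inl (⟨a,h⟩, (ρ, (b, σ)))) else 0)
      + z (Sum.inr (a, (ρ, (Fin.castSucc b, σ)))) := by
  rw [Matrix.mulVec]
  simp only [dotProduct, Fintype.sum_sum_type, Mm,
    Matrix.fromBlocks_apply₁₁, Matrix.fromBlocks_apply₁₂, Matrix.kroneckerMap_apply,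
    Matrix.transpose_apply, Fintype.sum_prod_type, Ek_apply, Fk_apply, Matrix.one_apply]
  simp only [ite_mul, mul_ite, mul_one, mul_zero, zero_mul, one_mul, Prod.mk.injEq, ite_and,
    sum_castSucc_eq, sum_succ_eq, sum_ite_const, sum_dite_const, Finset.sum_ite_eq,
    Finset.sum_ite_eq', Finset.mem_univ, if_true, Finset.sum_const_zero]

lemma mulVec_inr (z : CT k r → ℝ) (a : Fin (k+1)) (ρ σ : Fin r) (b : Fin k) :
    (Mm k r *ᵥ z) (Sum.inr (a, (ρ, (b, σ)))) =
      (if h : 0 < (a:ℕ) then z (Sum.inl (⟨(a:ℕ)-1, by omega⟩, (ρ, (b, σ)))) else 0)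
      + z (Sum.inr (a, (ρ, (Fin.succ b, σ)))) := by
  rw [Matrix.mulVec]
  simp only [dotProduct, Fintype.sum_sum_type, Mm,
    Matrix.fromBlocks_apply₂₁, Matrix.fromBlocks_apply₂₂, Matrix.kroneckerMap_apply,
    Matrix.transpose_apply, Fintype.sum_prod_type, Ek_apply, Fk_apply, Matrix.one_apply]
  simp only [ite_mul, mul_ite, mul_one, mul_zero, zero_mul, one_mul, Prod.mk.injEq, ite_and,
    sum_castSucc_eq, sum_succ_eq, sum_ite_const, sum_dite_const, Finset.sum_ite_eq,
    Finset.sum_ite_eq', Finset.mem_univ, if_true, Finset.sum_const_zero]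



variable {k r : ℕ}

lemma amgm (x y s t : ℝ) (ht : 0 < t) (hst : s * t = 1) :
    (1 - s)*x^2 + (1 - t)*y^2 ≤ (x+y)^2 := by
  have key : (x+y)^2 - (1-s)*x^2 - (1-t)*y^2 = t*(s*x+y)^2 := by
    linear_combination (-(s*x^2) - 2*x*y) * hst
  nlinarith [mul_nonneg ht.le (sq_nonneg (s*x+y))]

noncomputable def c1u (k a b : ℕ) : ℝ :=
  if a < k then 1 - phiV k (a+1) b / phiU k a b else 0
noncomputable def c2u (k a b : ℕ) : ℝ :=
  if b = 0 then 1 else 1 - phiV k a (b-1) / phiU k a b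
noncomputable def c1v (k a b : ℕ) : ℝ :=
  if 0 < a then 1 - phiU k (a-1) b / phiV k a b else 0
noncomputable def c2v (k a b : ℕ) : ℝ :=
  if b + 1 = k then 1 else 1 - phiU k a (b+1) / phiV k a b

lemma cu_ge {a b : ℕ} (hk : 0 < k) (ha : a ≤ k) (hb : b < k) :
    mu k ≤ c1u k a b + c2u k a b := by
  have hu := phiU_pos hk ha hb
  rw [← mul_le_mul_iff_of_pos_right hu]
  have h := Cu hk ha hb
  have expand : (c1u k a b + c2u k a b) * phiU k a b =
      ((if a < k then (1:ℝ) else 0) + 1) * phiU k a b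
        - (if a < k then phiV k (a+1) b else 0)
        - (if b = 0 then 0 else phiV k a (b-1)) := by
    have hne := hu.ne'
    rw [c1u, c2u]
    split_ifs <;> field_simp <;> ring
  rw [expand]
  linarith

lemma cv_ge {a b : ℕ} (hk : 0 < k) (ha : a ≤ k) (hb : b < k) :
    mu k ≤ c1v k a b + c2v k a b := by
  have hv := phiV_pos hk ha hb
  rw [← mul_le_mul_iff_of_pos_right hv]
  have h := Cv hk ha hb
  have expand : (c1v k a b + c2v k a b) * phiV k a b =
      ((if 0 < a then (1:ℝ) else 0) + 1) * phiV k a b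
        - (if 0 < a then phiU k (a-1) b else 0)
        - (if b + 1 = k then 0 else phiU k a (b+1)) := by
    have hne := hv.ne'
    rw [c1v, c2v]
    split_ifs <;> field_simp <;> ring
  rw [expand]
  linarith

noncomputable def Gu (k r : ℕ) (x : RT k r → ℝ) (a : Fin (k+1)) (ρ σ : Fin r)
    (d : Fin (k+1)) : ℝ :=
  if h : (d:ℕ) < k then c2u k (a:ℕ) (d:ℕ) * (x (Sum.inl (a, (ρ, (⟨d,h⟩, σ)))))^2 else 0

noncomputable def Gv (k r : ℕ) (x : RT k r → ℝ) (a : Fin (k+1)) (ρ σ : Fin r)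
    (d : Fin (k+1)) : ℝ :=
  if h : 0 < (d:ℕ) then
    c2v k (a:ℕ) ((d:ℕ)-1) * (x (Sum.inr (a, (ρ, (⟨(d:ℕ)-1, by omega⟩, σ)))))^2 else 0

lemma sumB1 (f : B1 k r → ℝ) :
    ∑ m : B1 k r, f m = ∑ ρ : Fin r, ∑ σ : Fin r, ∑ b : Fin k, f (ρ,(b,σ)) := by
  rw [Fintype.sum_prod_type]
  refine Finset.sum_congr rfl fun ρ _ => ?_
  rw [Fintype.sum_prod_type]
  exact Finset.sum_comm

lemma rayleigh_lower (hk : 0 < k) (x : RT k r → ℝ) :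
    mu k * (∑ i, (x i)^2) ≤ ∑ j, (((Mm k r)ᵀ *ᵥ x) j)^2 := by
  classical
  -- Step A : the first group of columns
  have hA : ∀ (c : Fin k) (m : B1 k r),
      c1u k (c:ℕ) ((m.2.1:ℕ)) * (x (Sum.inl (Fin.castSucc c, m)))^2
      + c1v k ((c:ℕ)+1) ((m.2.1:ℕ)) * (x (Sum.inr (Fin.succ c, m)))^2
      ≤ (((Mm k r)ᵀ *ᵥ x) (Sum.inl (c,m)))^2 := by
    intro c m
    rw [mulVecT_inl]
    have hu := phiU_pos (a := (c:ℕ)) (b := (m.2.1:ℕ)) hk (le_of_lt c.isLt) m.2.1.isLt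
    have hv := phiV_pos (a := (c:ℕ)+1) (b := (m.2.1:ℕ)) hk c.isLt m.2.1.isLt
    have e1 : c1u k (c:ℕ) ((m.2.1:ℕ)) = 1 - phiV k ((c:ℕ)+1) ((m.2.1:ℕ)) / phiU k (c:ℕ) ((m.2.1:ℕ)) := if_pos c.isLt
    have e2 : c1v k ((c:ℕ)+1) ((m.2.1:ℕ)) = 1 - phiU k (c:ℕ) ((m.2.1:ℕ)) / phiV k ((c:ℕ)+1) ((m.2.1:ℕ)) := by
      rw [c1v, if_pos (Nat.succ_pos _)]
      norm_num
    rw [e1, e2]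
    apply amgm _ _ _ _ (div_pos hu hv)
    field_simp
  -- Step B pointwise
  have hB : ∀ (a : Fin (k+1)) (ρ σ : Fin r) (d : Fin (k+1)),
      Gu k r x a ρ σ d + Gv k r x a ρ σ d
        ≤ (((Mm k r)ᵀ *ᵥ x) (Sum.inr (a,(ρ,(d,σ)))))^2 := by
    intro a ρ σ d
    rw [mulVecT_inr, Gu, Gv]
    by_cases hd : (d:ℕ) < k
    · by_cases hd0 : 0 < (d:ℕ)
      · rw [dif_pos hd, dif_pos hd0, dif_pos hd, dif_pos hd0]
        have hu := phiU_pos (a := (a:ℕ)) (b := (d:ℕ)) hk (by omega) hd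
        have hv := phiV_pos (a := (a:ℕ)) (b := (d:ℕ)-1) hk (by omega) (by omega)
        have e1 : c2u k (a:ℕ) (d:ℕ) = 1 - phiV k (a:ℕ) ((d:ℕ)-1) / phiU k (a:ℕ) (d:ℕ) := by
          rw [c2u, if_neg (by omega)]
        have e2 : c2v k (a:ℕ) ((d:ℕ)-1) = 1 - phiU k (a:ℕ) (d:ℕ) / phiV k (a:ℕ) ((d:ℕ)-1) := by
          have hdd : (d:ℕ) - 1 + 1 = (d:ℕ) := by omega
          rw [c2v, if_neg (by omega), hdd]
        rw [e1, e2]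
        apply amgm _ _ _ _ (div_pos hu hv)
        field_simp
      · rw [dif_pos hd, dif_neg hd0, dif_pos hd, dif_neg hd0]
        have e1 : c2u k (a:ℕ) (d:ℕ) = 1 := by rw [c2u, if_pos (by omega)]
        rw [e1]; simp
    · have hd0 : 0 < (d:ℕ) := by omega
      rw [dif_neg hd, dif_pos hd0, dif_neg hd, dif_pos hd0]
      have e2 : c2v k (a:ℕ) ((d:ℕ)-1) = 1 := by
        rw [c2v, if_pos (by omega)]
      rw [e2]; simp
  -- reindexings
  have eU : (∑ a : Fin (k+1), ∑ ρ : Fin r, ∑ σ : Fin r, ∑ b : Fin k,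
        c1u k (a:ℕ) (b:ℕ) * (x (Sum.inl (a,(ρ,(b,σ)))))^2)
      = ∑ c : Fin k, ∑ ρ : Fin r, ∑ σ : Fin r, ∑ b : Fin k,
        c1u k (c:ℕ) (b:ℕ) * (x (Sum.inl (Fin.castSucc c,(ρ,(b,σ)))))^2 := by
    rw [Fin.sum_univ_castSucc]
    simp [c1u]
  have eV : (∑ a : Fin (k+1), ∑ ρ : Fin r, ∑ σ : Fin r, ∑ b : Fin k,
        c1v k (a:ℕ) (b:ℕ) * (x (Sum.inr (a,(ρ,(b,σ)))))^2)
      = ∑ c : Fin k, ∑ ρ : Fin r, ∑ σ : Fin r, ∑ b : Fin k,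
        c1v k ((c:ℕ)+1) (b:ℕ) * (x (Sum.inr (Fin.succ c,(ρ,(b,σ)))))^2 := by
    rw [Fin.sum_univ_succ]
    simp [c1v]
  have hstepA : (∑ a : Fin (k+1), ∑ ρ : Fin r, ∑ σ : Fin r, ∑ b : Fin k,
        c1u k (a:ℕ) (b:ℕ) * (x (Sum.inl (a,(ρ,(b,σ)))))^2)
      + (∑ a : Fin (k+1), ∑ ρ : Fin r, ∑ σ : Fin r, ∑ b : Fin k,
        c1v k (a:ℕ) (b:ℕ) * (x (Sum.inr (a,(ρ,(b,σ)))))^2)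
      ≤ ∑ p : Fin k × B1 k r, (((Mm k r)ᵀ *ᵥ x) (Sum.inl p))^2 := by
    rw [eU, eV, ← Finset.sum_add_distrib, Fintype.sum_prod_type]
    refine Finset.sum_le_sum fun c _ => ?_
    rw [sumB1 (fun m => (((Mm k r)ᵀ *ᵥ x) (Sum.inl (c,m)))^2), ← Finset.sum_add_distrib]
    refine Finset.sum_le_sum fun ρ _ => ?_
    rw [← Finset.sum_add_distrib]
    refine Finset.sum_le_sum fun σ _ => ?_
    rw [← Finset.sum_add_distrib]
    refine Finset.sum_le_sum fun b _ => ?_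
    exact hA c (ρ,(b,σ))
  have hstepB : (∑ a : Fin (k+1), ∑ ρ : Fin r, ∑ σ : Fin r, ∑ b : Fin k,
        c2u k (a:ℕ) (b:ℕ) * (x (Sum.inl (a,(ρ,(b,σ)))))^2)
      + (∑ a : Fin (k+1), ∑ ρ : Fin r, ∑ σ : Fin r, ∑ b : Fin k,
        c2v k (a:ℕ) (b:ℕ) * (x (Sum.inr (a,(ρ,(b,σ)))))^2)
      ≤ ∑ p : Fin (k+1) × B2 k r, (((Mm k r)ᵀ *ᵥ x) (Sum.inr p))^2 := by
    rw [← Finset.sum_add_distrib, Fintype.sum_prod_type]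
    refine Finset.sum_le_sum fun a _ => ?_
    rw [← Finset.sum_add_distrib, Fintype.sum_prod_type]
    refine Finset.sum_le_sum fun ρ _ => ?_
    rw [Fintype.sum_prod_type]
    conv_rhs => rw [Finset.sum_comm]
    rw [← Finset.sum_add_distrib]
    refine Finset.sum_le_sum fun σ _ => ?_
    have h1 : (∑ b : Fin k, c2u k (a:ℕ) (b:ℕ) * (x (Sum.inl (a,(ρ,(b,σ)))))^2)
        = ∑ d : Fin (k+1), Gu k r x a ρ σ d := by
      rw [Fin.sum_univ_castSucc]
      simp [Gu]
    have h2 : (∑ b : Fin k, c2v k (a:ℕ) (b:ℕ) * (x (Sum.inr (a,(ρ,(b,σ)))))^2)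
        = ∑ d : Fin (k+1), Gv k r x a ρ σ d := by
      rw [Fin.sum_univ_succ]
      simp [Gv]
    rw [h1, h2, ← Finset.sum_add_distrib]
    exact Finset.sum_le_sum fun d _ => hB a ρ σ d
  -- total sums
  have hsum : ∑ i : RT k r, (x i)^2
      = (∑ a : Fin (k+1), ∑ ρ : Fin r, ∑ σ : Fin r, ∑ b : Fin k,
          (x (Sum.inl (a,(ρ,(b,σ)))))^2)
      + (∑ a : Fin (k+1), ∑ ρ : Fin r, ∑ σ : Fin r, ∑ b : Fin k,
          (x (Sum.inr (a,(ρ,(b,σ)))))^2) := by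
    rw [Fintype.sum_sum_type]
    congr 1 <;>
      (rw [Fintype.sum_prod_type]; exact Finset.sum_congr rfl fun a _ => sumB1 _)
  have htot : ∑ j : CT k r, (((Mm k r)ᵀ *ᵥ x) j)^2
      = (∑ p : Fin k × B1 k r, (((Mm k r)ᵀ *ᵥ x) (Sum.inl p))^2)
      + (∑ p : Fin (k+1) × B2 k r, (((Mm k r)ᵀ *ᵥ x) (Sum.inr p))^2) :=
    Fintype.sum_sum_type _
  -- pointwise coefficient bounds summed
  have hmuU : mu k * (∑ a : Fin (k+1), ∑ ρ : Fin r, ∑ σ : Fin r, ∑ b : Fin k,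
        (x (Sum.inl (a,(ρ,(b,σ)))))^2)
      ≤ (∑ a : Fin (k+1), ∑ ρ : Fin r, ∑ σ : Fin r, ∑ b : Fin k,
          c1u k (a:ℕ) (b:ℕ) * (x (Sum.inl (a,(ρ,(b,σ)))))^2)
      + (∑ a : Fin (k+1), ∑ ρ : Fin r, ∑ σ : Fin r, ∑ b : Fin k,
          c2u k (a:ℕ) (b:ℕ) * (x (Sum.inl (a,(ρ,(b,σ)))))^2) := by
    rw [← Finset.sum_add_distrib]
    simp only [Finset.mul_sum]
    refine Finset.sum_le_sum fun a _ => ?_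
    rw [← Finset.sum_add_distrib]
    refine Finset.sum_le_sum fun ρ _ => ?_
    rw [← Finset.sum_add_distrib]
    refine Finset.sum_le_sum fun σ _ => ?_
    rw [← Finset.sum_add_distrib]
    refine Finset.sum_le_sum fun b _ => ?_
    rw [← add_mul]
    exact mul_le_mul_of_nonneg_right (cu_ge hk (by omega) b.isLt) (sq_nonneg _)
  have hmuV : mu k * (∑ a : Fin (k+1), ∑ ρ : Fin r, ∑ σ : Fin r, ∑ b : Fin k,
        (x (Sum.inr (a,(ρ,(b,σ)))))^2)
      ≤ (∑ a : Fin (k+1), ∑ ρ : Fin r, ∑ σ : Fin r, ∑ b : Fin k,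
          c1v k (a:ℕ) (b:ℕ) * (x (Sum.inr (a,(ρ,(b,σ)))))^2)
      + (∑ a : Fin (k+1), ∑ ρ : Fin r, ∑ σ : Fin r, ∑ b : Fin k,
          c2v k (a:ℕ) (b:ℕ) * (x (Sum.inr (a,(ρ,(b,σ)))))^2) := by
    rw [← Finset.sum_add_distrib]
    simp only [Finset.mul_sum]
    refine Finset.sum_le_sum fun a _ => ?_
    rw [← Finset.sum_add_distrib]
    refine Finset.sum_le_sum fun ρ _ => ?_
    rw [← Finset.sum_add_distrib]
    refine Finset.sum_le_sum fun σ _ => ?_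
    rw [← Finset.sum_add_distrib]
    refine Finset.sum_le_sum fun b _ => ?_
    rw [← add_mul]
    exact mul_le_mul_of_nonneg_right (cv_ge hk (by omega) b.isLt) (sq_nonneg _)
  rw [hsum, htot, mul_add]
  linarith



lemma sin_flip (hk : 0 < k) :
    Real.sin ((2*(k:ℝ)) * th k) = Real.sin ((2*(k:ℝ)-1) * th k) := by
  have hne : (4*(k:ℝ)-1) ≠ 0 := by nlinarith [kcast hk]
  have h : (2*(k:ℝ)) * th k = π - (2*(k:ℝ)-1) * th k := by
    rw [th, mul_div_assoc', mul_div_assoc', eq_sub_iff_add_eq, ← add_div, div_eq_iff hne]; ring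
  rw [h, Real.sin_pi_sub]

noncomputable def wvec (k r : ℕ) : RT k r → ℝ
  | Sum.inl (a, (ρ, (b, σ))) =>
      if (ρ:ℕ) = 0 ∧ (σ:ℕ) = 0 ∧ (a:ℕ) = (b:ℕ)+1 then
        -Real.sin ((2*(b:ℝ)+1) * th k) else 0
  | Sum.inr (a, (ρ, (b, σ))) =>
      if (ρ:ℕ) = 0 ∧ (σ:ℕ) = 0 ∧ (a:ℕ) = (b:ℕ)+2 then
        Real.sin ((2*(b:ℝ)+2) * th k) else 0

lemma zvec_inl (c : Fin k) (ρ σ : Fin r) (b : Fin k) :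
    ((Mm k r)ᵀ *ᵥ wvec k r) (Sum.inl (c, (ρ,(b,σ)))) =
      if (ρ:ℕ) = 0 ∧ (σ:ℕ) = 0 ∧ (c:ℕ) = (b:ℕ)+1 then
        -Real.sin ((2*(b:ℝ)+1)*th k) + Real.sin ((2*(b:ℝ)+2)*th k) else 0 := by
  rw [mulVecT_inl]
  simp only [wvec, Fin.coe_castSucc, Fin.val_succ]
  split_ifs with h1 h2 h2
  · ring
  · exact absurd ⟨h1.1, h1.2.1, by omega⟩ h2
  · exact absurd ⟨h2.1, h2.2.1, by omega⟩ h1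
  · ring

lemma zvec_inr_cast (a : Fin (k+1)) (ρ σ : Fin r) (b : Fin k) :
    ((Mm k r)ᵀ *ᵥ wvec k r) (Sum.inr (a,(ρ,(Fin.castSucc b,σ)))) =
      if (ρ:ℕ) = 0 ∧ (σ:ℕ) = 0 ∧ (a:ℕ) = (b:ℕ)+1 then
        -Real.sin ((2*(b:ℝ)+1)*th k)
          + (if 0 < (b:ℕ) then Real.sin ((2*(b:ℝ))*th k) else 0)
      else 0 := by
  rw [mulVecT_inr]
  have hlt : ((Fin.castSucc b : Fin (k+1)):ℕ) < k := b.isLt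
  rw [dif_pos hlt]
  have hfe : (⟨((Fin.castSucc b : Fin (k+1)):ℕ), hlt⟩ : Fin k) = b := by
    simp [Fin.ext_iff]
  rw [hfe]
  by_cases hb0 : 0 < (b:ℕ)
  · rw [dif_pos (show 0 < ((Fin.castSucc b : Fin (k+1)):ℕ) by simpa using hb0),
      if_pos hb0]
    simp only [wvec, Fin.coe_castSucc, Fin.val_mk]
    have hcast : (2*((((b:ℕ)) - 1 : ℕ):ℝ)+2) = 2*(b:ℝ) := by
      push_cast [Nat.cast_sub (by omega : 1 ≤ (b:ℕ))]; ring
    split_ifs with h1 h2 h2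
    · rw [hcast]
    · exact absurd ⟨h1.1, h1.2.1, by omega⟩ h2
    · exact absurd ⟨h2.1, h2.2.1, by omega⟩ h1
    · ring
  · rw [dif_neg (show ¬ 0 < ((Fin.castSucc b : Fin (k+1)):ℕ) by simpa using hb0),
      if_neg hb0]
    simp only [wvec, Fin.coe_castSucc]
    split_ifs with h1 <;> ring

lemma zvec_inr_succ (a : Fin (k+1)) (ρ σ : Fin r) (b : Fin k) :
    ((Mm k r)ᵀ *ᵥ wvec k r) (Sum.inr (a,(ρ,(Fin.succ b,σ)))) =
      if (ρ:ℕ) = 0 ∧ (σ:ℕ) = 0 ∧ (a:ℕ) = (b:ℕ)+2 then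
        (if (b:ℕ)+1 < k then -Real.sin ((2*(b:ℝ)+3)*th k) else 0)
          + Real.sin ((2*(b:ℝ)+2)*th k)
      else 0 := by
  rw [mulVecT_inr]
  have h0 : 0 < ((Fin.succ b : Fin (k+1)):ℕ) := by simp
  rw [dif_pos h0]
  have hfe : (⟨((Fin.succ b : Fin (k+1)):ℕ) - 1, by omega⟩ : Fin k) = b := by
    simp [Fin.ext_iff]
  rw [hfe]
  by_cases hbk : (b:ℕ)+1 < k
  · rw [dif_pos (show ((Fin.succ b : Fin (k+1)):ℕ) < k by simpa using hbk),
      if_pos hbk]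
    simp only [wvec, Fin.val_succ, Fin.val_mk]
    split_ifs with h1
    · push_cast; ring_nf
    · ring
  · rw [dif_neg (show ¬ ((Fin.succ b : Fin (k+1)):ℕ) < k by simpa using hbk),
      if_neg hbk]
    simp only [wvec, Fin.val_succ]
    split_ifs with h1 <;> ring

lemma Hw_inl (hk : 0 < k) (a : Fin (k+1)) (ρ σ : Fin r) (b : Fin k) :
    (Mm k r *ᵥ ((Mm k r)ᵀ *ᵥ wvec k r)) (Sum.inl (a,(ρ,(b,σ))))
      = mu k * wvec k r (Sum.inl (a,(ρ,(b,σ)))) := by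
  rw [mulVec_inl, zvec_inr_cast]
  have key := two_sin (k := k) (2*(b:ℝ)+1)
  have e1 : (2*(b:ℝ)+1-1) = 2*(b:ℝ) := by ring
  have e2 : (2*(b:ℝ)+1+1) = 2*(b:ℝ)+2 := by ring
  rw [e1, e2] at key
  by_cases hC : (ρ:ℕ) = 0 ∧ (σ:ℕ) = 0 ∧ (a:ℕ) = (b:ℕ)+1
  · rw [if_pos hC]
    have hw : wvec k r (Sum.inl (a,(ρ,(b,σ)))) = -Real.sin ((2*(b:ℝ)+1) * th k) := by
      simp only [wvec]; rw [if_pos hC]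
    rw [hw]
    by_cases hak : (a:ℕ) < k
    · rw [dif_pos hak, zvec_inl]
      simp only [Fin.val_mk]
      rw [if_pos ⟨hC.1, hC.2.1, hC.2.2⟩]
      by_cases hb0 : 0 < (b:ℕ)
      · rw [if_pos hb0]
        linear_combination key
      · rw [if_neg hb0]
        have hs0 : Real.sin ((2*(b:ℝ))*th k) = 0 := by
          have hb00 : (b:ℝ) = 0 := by exact_mod_cast (by omega : (b:ℕ) = 0)
          rw [hb00]; norm_num
        linear_combination key - hs0
    · rw [dif_neg hak]
      have hbk : (b:ℕ)+1 = k := by omega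
      have hflip : Real.sin ((2*(b:ℝ)+2)*th k) = Real.sin ((2*(b:ℝ)+1)*th k) := by
        have hbR : (b:ℝ) = (k:ℝ) - 1 := by
          have : ((b:ℕ):ℝ) + 1 = k := by exact_mod_cast hbk
          linarith
        have f1 : (2*(b:ℝ)+2) = 2*(k:ℝ) := by rw [hbR]; ring
        have f2 : (2*(b:ℝ)+1) = 2*(k:ℝ)-1 := by rw [hbR]; ring
        rw [f1, f2]; exact sin_flip hk
      by_cases hb0 : 0 < (b:ℕ)
      · rw [if_pos hb0]
        linear_combination key - hflip
      · rw [if_neg hb0]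
        have hs0 : Real.sin ((2*(b:ℝ))*th k) = 0 := by
          have hb00 : (b:ℝ) = 0 := by exact_mod_cast (by omega : (b:ℕ) = 0)
          rw [hb00]; norm_num
        linear_combination key - hflip - hs0
  · rw [if_neg hC]
    have hw : wvec k r (Sum.inl (a,(ρ,(b,σ)))) = 0 := by
      simp only [wvec]; rw [if_neg hC]
    rw [hw]
    by_cases hak : (a:ℕ) < k
    · rw [dif_pos hak, zvec_inl]
      simp only [Fin.val_mk]
      rw [if_neg (by intro hcon; exact hC ⟨hcon.1, hcon.2.1, hcon.2.2⟩)]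
      ring
    · rw [dif_neg hak]; ring

lemma Hw_inr (hk : 0 < k) (a : Fin (k+1)) (ρ σ : Fin r) (b : Fin k) :
    (Mm k r *ᵥ ((Mm k r)ᵀ *ᵥ wvec k r)) (Sum.inr (a,(ρ,(b,σ))))
      = mu k * wvec k r (Sum.inr (a,(ρ,(b,σ)))) := by
  rw [mulVec_inr, zvec_inr_succ]
  by_cases hC : (ρ:ℕ) = 0 ∧ (σ:ℕ) = 0 ∧ (a:ℕ) = (b:ℕ)+2
  · rw [if_pos hC]
    have hw : wvec k r (Sum.inr (a,(ρ,(b,σ)))) = Real.sin ((2*(b:ℝ)+2)*th k) := by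
      simp only [wvec]; rw [if_pos hC]
    rw [hw]
    have h0a : 0 < (a:ℕ) := by omega
    rw [dif_pos h0a, zvec_inl]
    simp only [Fin.val_mk]
    rw [if_pos ⟨hC.1, hC.2.1, by omega⟩]
    have hbk : (b:ℕ)+1 < k := by omega
    rw [if_pos hbk]
    have key := two_sin (k := k) (2*(b:ℝ)+2)
    have e1 : (2*(b:ℝ)+2-1) = 2*(b:ℝ)+1 := by ring
    have e2 : (2*(b:ℝ)+2+1) = 2*(b:ℝ)+3 := by ring
    rw [e1, e2] at key
    linear_combination -key
  · rw [if_neg hC]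
    have hw : wvec k r (Sum.inr (a,(ρ,(b,σ)))) = 0 := by
      simp only [wvec]; rw [if_neg hC]
    rw [hw]
    by_cases h0a : 0 < (a:ℕ)
    · rw [dif_pos h0a, zvec_inl]
      simp only [Fin.val_mk]
      rw [if_neg (by intro hcon; exact hC ⟨hcon.1, hcon.2.1, by omega⟩)]
      ring
    · rw [dif_neg h0a]; ring

lemma eigen_eq (hk : 0 < k) :
    (Mm k r * (Mm k r)ᴴ) *ᵥ wvec k r = mu k • wvec k r := by
  rw [Matrix.conjTranspose_eq_transpose_of_trivial, ← Matrix.mulVec_mulVec]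
  funext i
  rcases i with ⟨a, ρ, b, σ⟩ | ⟨a, ρ, b, σ⟩
  · rw [Pi.smul_apply, smul_eq_mul]; exact Hw_inl hk a ρ σ b
  · rw [Pi.smul_apply, smul_eq_mul]; exact Hw_inr hk a ρ σ b

lemma th_lt_pi (hk : 0 < k) : th k < π := by
  rw [th]
  exact div_lt_self Real.pi_pos (by nlinarith [kcast hk])

lemma wvec_ne (hk : 0 < k) (hr : 0 < r) : wvec k r ≠ 0 := by
  intro h
  have h1 := congrFun h (Sum.inl (⟨1, by omega⟩, (⟨0, hr⟩, (⟨0, hk⟩, ⟨0, hr⟩))))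
  simp only [wvec, Pi.zero_apply, Fin.val_mk] at h1
  norm_num at h1
  have hpos := Real.sin_pos_of_pos_of_lt_pi (th_pos hk) (th_lt_pi hk)
  rw [h1] at hpos
  exact lt_irrefl 0 hpos

lemma iInf_eigen (hk : 0 < k) (hr : 0 < r) :
    (⨅ i, (Matrix.isHermitian_mul_conjTranspose_self (Mm k r)).eigenvalues i) = mu k := by
  classical
  set hH := Matrix.isHermitian_mul_conjTranspose_self (Mm k r) with hHdef
  haveI : Nonempty (RT k r) := ⟨Sum.inl (⟨0, by omega⟩, (⟨0,hr⟩, (⟨0,hk⟩, ⟨0,hr⟩)))⟩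
  apply le_antisymm
  · -- some eigenvalue equals mu k
    set U : Matrix (RT k r) (RT k r) ℝ := ((hH.eigenvectorUnitary : Matrix.unitaryGroup (RT k r) ℝ) : Matrix (RT k r) (RT k r) ℝ) with hU
    have hUsU : star U * U = 1 := mem_unitaryGroup_iff'.mp hH.eigenvectorUnitary.2
    have hUUs : U * star U = 1 := mem_unitaryGroup_iff.mp hH.eigenvectorUnitary.2
    set y : RT k r → ℝ := star U *ᵥ wvec k r with hy
    have hUy : U *ᵥ y = wvec k r := by
      rw [hy, Matrix.mulVec_mulVec, hUUs, Matrix.one_mulVec]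
    have hy0 : y ≠ 0 := by
      intro h0
      exact wvec_ne hk hr (by rw [← hUy, h0, Matrix.mulVec_zero])
    have hofr : (RCLike.ofReal ∘ hH.eigenvalues : RT k r → ℝ) = hH.eigenvalues := by
      funext j; simp
    have hsp := hH.spectral_theorem
    have hmat : star U * (Mm k r * (Mm k r)ᴴ) = Matrix.diagonal hH.eigenvalues * star U := by
      conv_lhs => rw [hsp]
      rw [hofr, Unitary.conjStarAlgAut_apply, ← hU, ← Matrix.mul_assoc, ← Matrix.mul_assoc, hUsU, Matrix.one_mul]
    have hDy : (Matrix.diagonal hH.eigenvalues) *ᵥ y = mu k • y := by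
      calc (Matrix.diagonal hH.eigenvalues) *ᵥ y
          = (Matrix.diagonal hH.eigenvalues * star U) *ᵥ wvec k r := by
            rw [hy, Matrix.mulVec_mulVec]
        _ = (star U * (Mm k r * (Mm k r)ᴴ)) *ᵥ wvec k r := by rw [hmat]
        _ = star U *ᵥ ((Mm k r * (Mm k r)ᴴ) *ᵥ wvec k r) := by
            rw [Matrix.mulVec_mulVec]
        _ = star U *ᵥ (mu k • wvec k r) := by rw [eigen_eq hk]
        _ = mu k • y := by rw [Matrix.mulVec_smul, hy]
    obtain ⟨j, hj⟩ := Function.ne_iff.mp hy0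
    have hjv : hH.eigenvalues j * y j = mu k * y j := by
      have := congrFun hDy j
      rwa [Matrix.mulVec_diagonal, Pi.smul_apply, smul_eq_mul] at this
    have hev : hH.eigenvalues j = mu k :=
      mul_right_cancel₀ (by simpa using hj) hjv
    rw [← hev]
    exact ciInf_le (Set.Finite.bddBelow (Set.finite_range _)) j
  · apply le_ciInf
    intro i
    set v : RT k r → ℝ := ⇑(hH.eigenvectorBasis i) with hv
    have hmv : (Mm k r * (Mm k r)ᴴ) *ᵥ v = hH.eigenvalues i • v := hH.mulVec_eigenvectorBasis i
    have hn : ∑ j, (v j)^2 = 1 := by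
      have h1 : ‖hH.eigenvectorBasis i‖ = 1 := hH.eigenvectorBasis.orthonormal.1 i
      rw [EuclideanSpace.norm_eq] at h1
      have h2 : ∑ j, ‖hH.eigenvectorBasis i j‖^2 = 1 := by
        have hnn : 0 ≤ ∑ j, ‖hH.eigenvectorBasis i j‖^2 :=
          Finset.sum_nonneg fun j _ => sq_nonneg _
        nlinarith [Real.sq_sqrt hnn, h1]
      simpa [hv, Real.norm_eq_abs, sq_abs] using h2
    have hray := rayleigh_lower hk v
    have hq : ∑ j, (((Mm k r)ᵀ *ᵥ v) j)^2 = hH.eigenvalues i := by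
      have hdp : v ⬝ᵥ ((Mm k r * (Mm k r)ᴴ) *ᵥ v) = hH.eigenvalues i := by
        rw [hmv, dotProduct_smul, smul_eq_mul]
        have : v ⬝ᵥ v = ∑ j, (v j)^2 := by
          simp [dotProduct, pow_two]
        rw [this, hn, mul_one]
      rw [← hdp, Matrix.conjTranspose_eq_transpose_of_trivial, ← Matrix.mulVec_mulVec,
        dotProduct_mulVec]
      nth_rewrite 2 [← Matrix.transpose_transpose (Mm k r)]
      rw [Matrix.vecMul_transpose]
      simp [dotProduct, pow_two]
    rw [← hq]
    calc mu k = mu k * ∑ j, (v j)^2 := by rw [hn, mul_one]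
      _ ≤ _ := hray

lemma sqrt_mu (hk : 0 < k) :
    Real.sqrt (mu k) = 2 * Real.sin (π / (8*(k:ℝ) - 2)) := by
  have hk1 := kcast hk
  have hden : (8*(k:ℝ)-2) ≠ 0 := by nlinarith
  have hx : th k = 2 * (π / (8*(k:ℝ)-2)) := by
    rw [th]
    have : (4*(k:ℝ)-1) ≠ 0 := by nlinarith
    rw [mul_div_assoc', div_eq_div_iff this hden]
    ring
  have hmu : mu k = (2 * Real.sin (π / (8*(k:ℝ)-2)))^2 := by
    rw [mu, hx]
    linear_combination (-2 : ℝ)*Real.cos_two_mul' (π / (8*(k:ℝ)-2))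
      - 2*Real.sin_sq_add_cos_sq (π / (8*(k:ℝ)-2))
  rw [hmu]
  apply Real.sqrt_sq
  have hxs : 0 ≤ π / (8*(k:ℝ)-2) := by
    apply div_nonneg Real.pi_pos.le; nlinarith
  have hxl : π / (8*(k:ℝ)-2) ≤ π := div_le_self Real.pi_pos.le (by nlinarith)
  have := Real.sin_nonneg_of_nonneg_of_le_pi hxs hxl
  linarith

lemma sin_chord {x : ℝ} (hx0 : 0 ≤ x) (hx : x ≤ π/6) : x * (3/π) ≤ Real.sin x := by
  have hπ := Real.pi_pos
  have ht1 : x*(6/π) ≤ 1 := by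
    calc x*(6/π) ≤ (π/6)*(6/π) := by
          apply mul_le_mul_of_nonneg_right hx (by positivity)
      _ = 1 := by field_simp
  have hc := strictConcaveOn_sin_Icc.concaveOn.2
    (show (0:ℝ) ∈ Set.Icc 0 π from Set.mem_Icc.mpr ⟨le_rfl, hπ.le⟩)
    (show π/6 ∈ Set.Icc 0 π from Set.mem_Icc.mpr ⟨by positivity, by linarith⟩)
    (show (0:ℝ) ≤ 1 - x*(6/π) by linarith)
    (show (0:ℝ) ≤ x*(6/π) from mul_nonneg hx0 (by positivity))
    (show 1 - x*(6/π) + x*(6/π) = 1 by ring)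
  rw [smul_eq_mul, smul_eq_mul, smul_eq_mul, smul_eq_mul, Real.sin_zero,
    Real.sin_pi_div_six] at hc
  have hxe : (1-x*(6/π)) * 0 + x*(6/π) * (π/6) = x := by
    rw [mul_zero, zero_add, mul_assoc, div_mul_div_comm, mul_comm 6 π, div_self (by positivity), mul_one]
  rw [hxe] at hc
  have : x*(6/π) * (1/2) = x * (3/π) := by ring
  linarith
lemma final_bound (hk : 0 < k) :
    3 / (4*(k:ℝ) - 1) ≤ 2 * Real.sin (π / (8*(k:ℝ) - 2)) := by
  have hk1 := kcast hk
  have hπ := Real.pi_pos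
  have hden : (0:ℝ) < 8*(k:ℝ)-2 := by nlinarith
  have h41 : (0:ℝ) < 4*(k:ℝ)-1 := by nlinarith
  have hx0 : (0:ℝ) ≤ π / (8*(k:ℝ)-2) := by
    apply div_nonneg Real.pi_pos.le; nlinarith
  have hx : π / (8*(k:ℝ)-2) ≤ π/6 := by
    rw [div_le_div_iff₀ hden (by norm_num)]
    nlinarith
  have hs := sin_chord hx0 hx
  have he : 2 * (π / (8*(k:ℝ)-2) * (3/π)) = 3 / (4*(k:ℝ)-1) := by
    rw [div_mul_div_comm, mul_div_assoc', div_eq_div_iff (mul_pos hden hπ).ne' h41.ne']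
    ring
  linarith

end St3

/-- Lemma 3.4. The smallest singular value `ω₄` of the block matrix
`[[E_kᵀ⊗I_{kr²}, I_{(k+1)r}⊗E_k⊗I_r], [F_kᵀ⊗I_{kr²}, I_{(k+1)r}⊗F_k⊗I_r]]` equals
`2·sin(π/(8k−2))`; in particular `ω₄ ≥ 3/(4k−1)`. -/
theorem statement3 (k r : ℕ) (hk : 0 < k) (hr : 0 < r) :
    let ω₄ := sigmaMin (Matrix.fromBlocks
      ((Ek ℝ k)ᵀ ⊗ₖ (1 : Matrix (Fin r × (Fin k × Fin r)) (Fin r × (Fin k × Fin r)) ℝ))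
      ((1 : Matrix (Fin (k+1)) (Fin (k+1)) ℝ) ⊗ₖ ((1 : Matrix (Fin r) (Fin r) ℝ) ⊗ₖ
        (Ek ℝ k ⊗ₖ (1 : Matrix (Fin r) (Fin r) ℝ))))
      ((Fk ℝ k)ᵀ ⊗ₖ (1 : Matrix (Fin r × (Fin k × Fin r)) (Fin r × (Fin k × Fin r)) ℝ))
      ((1 : Matrix (Fin (k+1)) (Fin (k+1)) ℝ) ⊗ₖ ((1 : Matrix (Fin r) (Fin r) ℝ) ⊗ₖ
        (Fk ℝ k ⊗ₖ (1 : Matrix (Fin r) (Fin r) ℝ)))));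
    ω₄ = 2 * Real.sin (Real.pi / (8 * (k : ℝ) - 2)) ∧ 3 / (4 * (k : ℝ) - 1) ≤ ω₄ := by
  intro ω₄
  have he : ω₄ = 2 * Real.sin (Real.pi / (8 * (k:ℝ) - 2)) := by
    show sigmaMin (St3.Mm k r) = _
    have hd : sigmaMin (St3.Mm k r) = Real.sqrt
        (⨅ i, (Matrix.isHermitian_mul_conjTranspose_self (St3.Mm k r)).eigenvalues i) := rfl
    rw [hd, St3.iInf_eigen hk hr]
    exact St3.sqrt_mu hk
  exact ⟨he, he ▸ St3.final_bound hk⟩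
end

section
/- Let k be a positive integer. There exist a permutation matrix P of size 2k(k+1) and a permutation matrix Q of size 2k²+2k+1 such that P·[[E_kᵀ⊗I_k, I_{k+1}⊗E_k],[F_kᵀ⊗I_k, I_{k+1}⊗F_k]]·Q equals the block-diagonal direct sum M₁ ⊕ M₁ ⊕ M₃ ⊕ M₃ ⊕ ⋯ ⊕ M_{2k−1} ⊕ M_{2k−1} ⊕ N_{2k}, where M_j denotes the j×j matrix with ones on the main diagonal and on the first superdiagonal and zeros elsewhere, and N_j denotes the j×(j+1) matrix with ones on the main diagonal and on the first superdiagonal and zeros elsewhere. -/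
open Matrix
open scoped Kronecker

namespace S4
def erF (k : ℕ) : ((Σ i : Fin k, Bool × Fin (2 * (i : ℕ) + 1)) ⊕ Fin (2 * k)) →
    ((Fin (k+1) × Fin k) ⊕ (Fin (k+1) × Fin k))
  | Sum.inl ⟨i, false, r⟩ =>
      if _ : (r : ℕ) % 2 = 0 then
        Sum.inl (⟨k - (i : ℕ) + (r : ℕ) / 2, by have := r.isLt; have := i.isLt; omega⟩,
                 ⟨(r : ℕ) / 2, by have := r.isLt; have := i.isLt; omega⟩)
      else
        Sum.inr (⟨k - (i : ℕ) + (r : ℕ) / 2 + 1, by have := r.isLt; have := i.isLt; omega⟩,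
                 ⟨(r : ℕ) / 2, by have := r.isLt; have := i.isLt; omega⟩)
  | Sum.inl ⟨i, true, r⟩ =>
      if _ : (r : ℕ) % 2 = 0 then
        Sum.inr (⟨(i : ℕ) - (r : ℕ) / 2, by have := i.isLt; omega⟩,
                 ⟨k - 1 - (r : ℕ) / 2, by have := i.isLt; omega⟩)
      else
        Sum.inl (⟨(i : ℕ) - 1 - (r : ℕ) / 2, by have := i.isLt; omega⟩,
                 ⟨k - 1 - (r : ℕ) / 2, by have := i.isLt; omega⟩)
  | Sum.inr r =>
      if _ : (r : ℕ) % 2 = 0 then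
        Sum.inl (⟨(r : ℕ) / 2, by have := r.isLt; omega⟩,
                 ⟨(r : ℕ) / 2, by have := r.isLt; omega⟩)
      else
        Sum.inr (⟨(r : ℕ) / 2 + 1, by have := r.isLt; omega⟩,
                 ⟨(r : ℕ) / 2, by have := r.isLt; omega⟩)

def erI (k : ℕ) : ((Fin (k+1) × Fin k) ⊕ (Fin (k+1) × Fin k)) →
    ((Σ i : Fin k, Bool × Fin (2 * (i : ℕ) + 1)) ⊕ Fin (2 * k))
  | Sum.inl (p, q) =>
      if _h : (q : ℕ) < (p : ℕ) then
        Sum.inl ⟨⟨k - (p : ℕ) + (q : ℕ), by have := p.isLt; have := q.isLt; omega⟩, false,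
                  ⟨2 * (q : ℕ), by have := p.isLt; have := q.isLt; exact show 2 * (q : ℕ) < 2 * (k - (p : ℕ) + (q : ℕ)) + 1 by omega⟩⟩
      else if _h2 : (p : ℕ) < (q : ℕ) then
        Sum.inl ⟨⟨k + (p : ℕ) - (q : ℕ), by have := p.isLt; have := q.isLt; omega⟩, true,
                  ⟨2 * k - 2 * (q : ℕ) - 1, by have := p.isLt; have := q.isLt; exact show _ < 2 * (k + (p : ℕ) - (q : ℕ)) + 1 by omega⟩⟩
      else
        Sum.inr ⟨2 * (p : ℕ), by have := p.isLt; have := q.isLt; omega⟩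
  | Sum.inr (p, q) =>
      if _h : (q : ℕ) + 1 < (p : ℕ) then
        Sum.inl ⟨⟨k - (p : ℕ) + (q : ℕ) + 1, by have := p.isLt; have := q.isLt; omega⟩, false,
                  ⟨2 * (q : ℕ) + 1, by have := p.isLt; have := q.isLt; exact show _ < 2 * (k - (p : ℕ) + (q : ℕ) + 1) + 1 by omega⟩⟩
      else if _h2 : (p : ℕ) ≤ (q : ℕ) then
        Sum.inl ⟨⟨k + (p : ℕ) - (q : ℕ) - 1, by have := p.isLt; have := q.isLt; omega⟩, true,
                  ⟨2 * k - 2 * (q : ℕ) - 2, by have := p.isLt; have := q.isLt; exact show _ < 2 * (k + (p : ℕ) - (q : ℕ) - 1) + 1 by omega⟩⟩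
      else
        Sum.inr ⟨2 * (q : ℕ) + 1, by have := p.isLt; have := q.isLt; omega⟩

lemma sigma_mk_eq {k : ℕ} {i i' : ℕ} (hi : i < k) (hi' : i' < k) {b b' : Bool}
    {r r' : ℕ} (hr : r < 2*i+1) (hr' : r' < 2*i'+1)
    (h : i = i') (h2 : b = b') (h3 : r = r') :
    (⟨⟨i, hi⟩, b, ⟨r, hr⟩⟩ : Σ i : Fin k, Bool × Fin (2*(i:ℕ)+1)) = ⟨⟨i', hi'⟩, b', ⟨r', hr'⟩⟩ := by
  subst h; subst h2; subst h3; rfl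

lemma er_left (k : ℕ) : Function.LeftInverse (erI k) (erF k) := by
  rintro (⟨⟨i, hi⟩, b, ⟨r, hr⟩⟩ | ⟨r, hr⟩)
  case inl =>
    have hr' : r < 2 * i + 1 := hr
    cases b <;>
    · simp only [erF, erI]
      split_ifs with h1 <;> (try dsimp only) <;> split_ifs with h2 h3 <;>
        (try simp only [Fin.val_mk, not_lt, Fin.mk_lt_mk, Fin.mk_le_mk] at h1 h2 h3) <;>
        first
          | exact congrArg Sum.inl (sigma_mk_eq _ _ _ _ (by omega) rfl (by omega))
          | exact congrArg Sum.inr (Fin.mk_eq_mk.mpr (by omega))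
          | (exfalso; omega)
  case inr =>
    simp only [erF, erI]
    split_ifs with h1 <;> (try dsimp only) <;> split_ifs with h2 h3 <;>
      (try simp only [Fin.val_mk, not_lt, Fin.mk_lt_mk, Fin.mk_le_mk] at h1 h2 h3) <;>
      first
        | exact congrArg Sum.inl (sigma_mk_eq _ _ _ _ (by omega) rfl (by omega))
        | exact congrArg Sum.inr (Fin.mk_eq_mk.mpr (by omega))
        | (exfalso; omega)

set_option maxHeartbeats 1000000 in
lemma er_right (k : ℕ) : Function.RightInverse (erI k) (erF k) := by
  rintro (⟨⟨p, hp⟩, ⟨q, hq⟩⟩ | ⟨⟨p, hp⟩, ⟨q, hq⟩⟩) <;>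
  · simp only [erI]
    split_ifs with h1 h2 <;> simp only [erF] <;> (try dsimp only) <;> split_ifs with h3 <;>
      (try dsimp only at h3) <;>
      (try simp only [Sum.inl.injEq, Sum.inr.injEq, Prod.mk.injEq, Fin.mk_eq_mk]) <;>
      first | (constructor <;> omega) | omega | (exfalso; omega)

def ecF (k : ℕ) : ((Σ i : Fin k, Bool × Fin (2 * (i : ℕ) + 1)) ⊕ Fin (2 * k + 1)) →
    ((Fin k × Fin k) ⊕ (Fin (k+1) × Fin (k+1)))
  | Sum.inl ⟨i, false, c⟩ =>
      if _ : (c : ℕ) % 2 = 0 then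
        Sum.inr (⟨k - (i : ℕ) + (c : ℕ) / 2, by have := c.isLt; have := i.isLt; omega⟩,
                 ⟨(c : ℕ) / 2, by have := c.isLt; have := i.isLt; omega⟩)
      else
        Sum.inl (⟨k - (i : ℕ) + (c : ℕ) / 2, by have := c.isLt; have := i.isLt; omega⟩,
                 ⟨(c : ℕ) / 2, by have := c.isLt; have := i.isLt; omega⟩)
  | Sum.inl ⟨i, true, c⟩ =>
      if _ : (c : ℕ) % 2 = 0 then
        Sum.inr (⟨(i : ℕ) - (c : ℕ) / 2, by have := i.isLt; omega⟩,
                 ⟨k - (c : ℕ) / 2, by omega⟩)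
      else
        Sum.inl (⟨(i : ℕ) - 1 - (c : ℕ) / 2, by have := i.isLt; omega⟩,
                 ⟨k - 1 - (c : ℕ) / 2, by have := i.isLt; omega⟩)
  | Sum.inr c =>
      if _ : (c : ℕ) % 2 = 0 then
        Sum.inr (⟨(c : ℕ) / 2, by have := c.isLt; omega⟩,
                 ⟨(c : ℕ) / 2, by have := c.isLt; omega⟩)
      else
        Sum.inl (⟨(c : ℕ) / 2, by have := c.isLt; omega⟩,
                 ⟨(c : ℕ) / 2, by have := c.isLt; omega⟩)

def ecI (k : ℕ) : ((Fin k × Fin k) ⊕ (Fin (k+1) × Fin (k+1))) →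
    ((Σ i : Fin k, Bool × Fin (2 * (i : ℕ) + 1)) ⊕ Fin (2 * k + 1))
  | Sum.inl (a, b) =>
      if _h : (b : ℕ) < (a : ℕ) then
        Sum.inl ⟨⟨k - (a : ℕ) + (b : ℕ), by have := a.isLt; have := b.isLt; omega⟩, false,
                  ⟨2 * (b : ℕ) + 1, by have := a.isLt; have := b.isLt; exact show _ < 2 * (k - (a : ℕ) + (b : ℕ)) + 1 by omega⟩⟩
      else if _h2 : (a : ℕ) < (b : ℕ) then
        Sum.inl ⟨⟨k + (a : ℕ) - (b : ℕ), by have := a.isLt; have := b.isLt; omega⟩, true,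
                  ⟨2 * k - 2 * (b : ℕ) - 1, by have := a.isLt; have := b.isLt; exact show _ < 2 * (k + (a : ℕ) - (b : ℕ)) + 1 by omega⟩⟩
      else
        Sum.inr ⟨2 * (a : ℕ) + 1, by have := a.isLt; omega⟩
  | Sum.inr (c, d) =>
      if _h : (d : ℕ) < (c : ℕ) then
        Sum.inl ⟨⟨k - (c : ℕ) + (d : ℕ), by have := c.isLt; have := d.isLt; omega⟩, false,
                  ⟨2 * (d : ℕ), by have := c.isLt; have := d.isLt; exact show _ < 2 * (k - (c : ℕ) + (d : ℕ)) + 1 by omega⟩⟩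
      else if _h2 : (c : ℕ) < (d : ℕ) then
        Sum.inl ⟨⟨k + (c : ℕ) - (d : ℕ), by have := c.isLt; have := d.isLt; omega⟩, true,
                  ⟨2 * k - 2 * (d : ℕ), by have := c.isLt; have := d.isLt; exact show _ < 2 * (k + (c : ℕ) - (d : ℕ)) + 1 by omega⟩⟩
      else
        Sum.inr ⟨2 * (c : ℕ), by have := c.isLt; omega⟩

lemma ec_left (k : ℕ) : Function.LeftInverse (ecI k) (ecF k) := by
  rintro (⟨⟨i, hi⟩, b, ⟨r, hr⟩⟩ | ⟨r, hr⟩)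
  case inl =>
    have hr' : r < 2 * i + 1 := hr
    cases b <;>
    · simp only [ecF, ecI]
      split_ifs with h1 <;> (try dsimp only) <;> split_ifs with h2 h3 <;>
        (try simp only [Fin.val_mk, not_lt, Fin.mk_lt_mk, Fin.mk_le_mk] at h1 h2 h3) <;>
        first
          | exact congrArg Sum.inl (sigma_mk_eq _ _ _ _ (by omega) rfl (by omega))
          | exact congrArg Sum.inr (Fin.mk_eq_mk.mpr (by omega))
          | (exfalso; omega)
  case inr =>
    simp only [ecF, ecI]
    split_ifs with h1 <;> (try dsimp only) <;> split_ifs with h2 h3 <;>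
      (try simp only [Fin.val_mk, not_lt, Fin.mk_lt_mk, Fin.mk_le_mk] at h1 h2 h3) <;>
      first
        | exact congrArg Sum.inl (sigma_mk_eq _ _ _ _ (by omega) rfl (by omega))
        | exact congrArg Sum.inr (Fin.mk_eq_mk.mpr (by omega))
        | (exfalso; omega)

set_option maxHeartbeats 1000000 in
lemma ec_right (k : ℕ) : Function.RightInverse (ecI k) (ecF k) := by
  rintro (⟨⟨p, hp⟩, ⟨q, hq⟩⟩ | ⟨⟨p, hp⟩, ⟨q, hq⟩⟩) <;>
  · simp only [ecI]
    split_ifs with h1 h2 <;> simp only [ecF] <;> (try dsimp only) <;> split_ifs with h3 <;>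
      (try dsimp only at h3) <;>
      (try simp only [Sum.inl.injEq, Sum.inr.injEq, Prod.mk.injEq, Fin.mk_eq_mk]) <;>
      first | (constructor <;> omega) | omega | (exfalso; omega)
end S4

/-- Appendix A. The matrix `[[E_kᵀ⊗I_k, I_{k+1}⊗E_k], [F_kᵀ⊗I_k, I_{k+1}⊗F_k]]`
can be transformed, by row and column permutations, into the direct sum
`M₁ ⊕ M₁ ⊕ M₃ ⊕ M₃ ⊕ ⋯ ⊕ M_{2k−1} ⊕ M_{2k−1} ⊕ N_{2k}`, where `M_j` (resp. `N_j`) is the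
`j×j` (resp. `j×(j+1)`) matrix with ones on the main diagonal and first superdiagonal. -/
theorem statement4 (k : ℕ) (hk : 0 < k) :
    ∃ (er : ((Σ i : Fin k, Bool × Fin (2 * (i : ℕ) + 1)) ⊕ Fin (2 * k)) ≃
            ((Fin (k+1) × Fin k) ⊕ (Fin (k+1) × Fin k)))
      (ec : ((Σ i : Fin k, Bool × Fin (2 * (i : ℕ) + 1)) ⊕ Fin (2 * k + 1)) ≃
            ((Fin k × Fin k) ⊕ (Fin (k+1) × Fin (k+1)))),
      (Matrix.fromBlocks
        ((Ek ℝ k)ᵀ ⊗ₖ (1 : Matrix (Fin k) (Fin k) ℝ))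
        ((1 : Matrix (Fin (k+1)) (Fin (k+1)) ℝ) ⊗ₖ Ek ℝ k)
        ((Fk ℝ k)ᵀ ⊗ₖ (1 : Matrix (Fin k) (Fin k) ℝ))
        ((1 : Matrix (Fin (k+1)) (Fin (k+1)) ℝ) ⊗ₖ Fk ℝ k)).submatrix er ec =
      Matrix.of (fun r c =>
        match r, c with
        | Sum.inl ⟨i, b, ri⟩, Sum.inl ⟨j, b', ci⟩ =>
            if i = j ∧ b = b' ∧ ((ci : ℕ) = (ri : ℕ) ∨ (ci : ℕ) = (ri : ℕ) + 1) then 1 else 0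
        | Sum.inr ri, Sum.inr ci =>
            if (ci : ℕ) = (ri : ℕ) ∨ (ci : ℕ) = (ri : ℕ) + 1 then 1 else 0
        | _, _ => 0) := by
  refine ⟨⟨S4.erF k, S4.erI k, S4.er_left k, S4.er_right k⟩,
          ⟨S4.ecF k, S4.ecI k, S4.ec_left k, S4.ec_right k⟩, ?_⟩
  ext r c
  rcases r with ⟨⟨i, hi⟩, b, ⟨ri, hri⟩⟩ | ⟨ri, hri⟩ <;>
    rcases c with ⟨⟨j, hj⟩, b', ⟨ci, hci⟩⟩ | ⟨ci, hci⟩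
  all_goals try have hri' : ri < 2 * i + 1 := hri
  all_goals try have hci' : ci < 2 * j + 1 := hci
  all_goals try cases b
  all_goals try cases b'
  all_goals (
    simp only [Equiv.coe_fn_mk, Matrix.submatrix_apply, S4.erF, S4.ecF]
    split_ifs with h1 h2 <;>
      simp only [Matrix.fromBlocks_apply₁₁, Matrix.fromBlocks_apply₁₂,
        Matrix.fromBlocks_apply₂₁, Matrix.fromBlocks_apply₂₂, Matrix.of_apply,
        Matrix.kroneckerMap_apply, Matrix.transpose_apply, Matrix.one_apply,
        Ek, Fk, Fin.mk.injEq, Fin.val_mk, Prod.mk.injEq, heq_eq_eq,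
        mul_ite, ite_mul, one_mul, mul_one, mul_zero, zero_mul, true_and, and_true,
        false_and, and_false, if_true, if_false, Bool.false_eq_true, Bool.true_eq_false] <;>
      (try dsimp only) <;>
      split_ifs <;> first | rfl | (exfalso; omega) | norm_num
  )
end
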